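/- arXiv:0911.5694 — 2 statements merged into one kernel-verified Lean document; each statement's English description precedes it below -/
import Mathlib

section
/- There is a bijection between the minimal coset representatives of C_n/A_{n-1} of length ℓ and strict partitions λ = (λ_1 > λ_2 > ... > λ_m > 0) with λ_1 ≤ n and Σλ_i = ℓ. -/
open Equiv Finset

/-- The signed adjacent transposition `s_i` (for `1 ≤ i`), acting on `ℤ` by swapping
`i, i+1` and simultaneously `-i, -(i+1)`. -/
def sgnSwap (i : ℕ) : Equiv.Perm ℤ :=
  Equiv.swap (i : ℤ) ((i : ℤ) + 1) * Equiv.swap (-(i : ℤ)) (-((i : ℤ) + 1))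

/-- The Coxeter generating set of the hyperoctahedral group `C_n`, realized as signed
permutations of `{±1, …, ±n}` inside `Equiv.Perm ℤ`: the signed adjacent transpositions
`s_1, …, s_(n-1)` together with the sign change `s_n = (n, -n)`. -/
def genC (n : ℕ) : Set (Equiv.Perm ℤ) :=
  {g | (∃ i : ℕ, 1 ≤ i ∧ i + 1 ≤ n ∧ g = sgnSwap i) ∨ g = Equiv.swap (n : ℤ) (-(n : ℤ))}

/-- The word length of `w` with respect to a generating set `S`
(the Coxeter length, when `S` is the set of simple reflections). -/
noncomputable def wordLen (S : Set (Equiv.Perm ℤ)) (w : Equiv.Perm ℤ) : ℕ :=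
  sInf {k | ∃ L : List (Equiv.Perm ℤ), L.length = k ∧ (∀ g ∈ L, g ∈ S) ∧ L.prod = w}

/-! ### length statistic -/

def kap (n : ℕ) (v : ℤ) : ℤ := if 0 < v then v else v + (2*n+1)

def fB (n : ℕ) (a b : ℤ) : ℕ :=
  (if kap n b < kap n a then 1 else 0) +
  (if (a < 0 ∧ b < 0) ∨ (a < 0 ∧ 0 < b ∧ 0 < a + b) ∨ (0 < a ∧ b < 0 ∧ 0 < a + b)
    then 1 else 0)

def gB (a : ℤ) : ℕ := if a < 0 then 1 else 0

def TB (n : ℕ) (v : ℤ → ℤ) (p : ℤ × ℤ) : ℕ :=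
  if p.1 < p.2 then fB n (v p.1) (v p.2) else if p.1 = p.2 then gB (v p.1) else 0

noncomputable def PP (n : ℕ) : Finset (ℤ × ℤ) := (Finset.Icc 1 (n:ℤ)) ×ˢ (Finset.Icc 1 (n:ℤ))

noncomputable def LB (n : ℕ) (u : Equiv.Perm ℤ) : ℕ := ∑ p ∈ PP n, TB n (⇑u) p

def isSP (n : ℕ) (u : Equiv.Perm ℤ) : Prop :=
  (∀ x : ℤ, u (-x) = -(u x)) ∧ (∀ x : ℤ, (n:ℤ) < |x| → u x = x)

/-! ### basic isSP lemmas -/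

lemma Equiv.Perm.apply_inv_self (u : Equiv.Perm ℤ) (x : ℤ) : u (u⁻¹ x) = x :=
  Equiv.apply_symm_apply u x

lemma Equiv.Perm.inv_apply_self (u : Equiv.Perm ℤ) (x : ℤ) : u⁻¹ (u x) = x :=
  Equiv.symm_apply_apply u x

lemma isSP_one (n : ℕ) : isSP n 1 := ⟨fun _ => rfl, fun _ _ => rfl⟩

lemma isSP_mul {n : ℕ} {u v : Equiv.Perm ℤ} (hu : isSP n u) (hv : isSP n v) :
    isSP n (u * v) := by
  refine ⟨fun x => ?_, fun x hx => ?_⟩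
  · simp only [Equiv.Perm.mul_apply, hv.1, hu.1]
  · simp only [Equiv.Perm.mul_apply, hv.2 x hx, hu.2 x hx]

lemma isSP_inv {n : ℕ} {u : Equiv.Perm ℤ} (hu : isSP n u) : isSP n u⁻¹ := by
  refine ⟨fun x => ?_, fun x hx => ?_⟩
  · apply u.injective
    rw [Perm.apply_inv_self, hu.1, Perm.apply_inv_self]
  · apply u.injective
    rw [Perm.apply_inv_self, hu.2 x hx]

lemma isSP_zero {n : ℕ} {u : Equiv.Perm ℤ} (hu : isSP n u) : u 0 = 0 := by
  have := hu.1 0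
  simp only [neg_zero] at this
  omega

lemma isSP_abs_le {n : ℕ} {u : Equiv.Perm ℤ} (hu : isSP n u) {x : ℤ}
    (hx : |x| ≤ (n:ℤ)) : |u x| ≤ (n:ℤ) := by
  by_contra h
  push_neg at h
  have h1 : u (u x) = u x := hu.2 (u x) h
  have h2 : u x = x := u.injective h1
  rw [h2] at h
  omega

lemma isSP_ne_zero {n : ℕ} {u : Equiv.Perm ℤ} (hu : isSP n u) {x : ℤ}
    (hx : x ≠ 0) : u x ≠ 0 := by
  intro h
  exact hx (u.injective (h.trans (isSP_zero hu).symm))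

lemma isSP_window {n : ℕ} {u : Equiv.Perm ℤ} (hu : isSP n u) {x : ℤ}
    (hx : x ∈ Finset.Icc (1:ℤ) n) : 1 ≤ |u x| ∧ |u x| ≤ (n:ℤ) := by
  simp only [Finset.mem_Icc] at hx
  have h1 : |x| ≤ (n:ℤ) := by rw [abs_le]; omega
  have h2 := isSP_abs_le hu h1
  have h3 : u x ≠ 0 := isSP_ne_zero hu (by omega)
  constructor
  · rcases abs_cases (u x) with ⟨e,_⟩|⟨e,_⟩ <;> omega
  · exact h2

lemma isSP_gen {n : ℕ} {g : Equiv.Perm ℤ} (hg : g ∈ genC n) : isSP n g := by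
  rcases hg with ⟨i, hi1, hi2, rfl⟩ | rfl
  · constructor
    · intro x
      simp only [sgnSwap, Equiv.Perm.mul_apply, Equiv.swap_apply_def]
      split_ifs <;> omega
    · intro x hx
      simp only [sgnSwap, Equiv.Perm.mul_apply, Equiv.swap_apply_def]
      have : (i:ℤ) + 1 ≤ n := by exact_mod_cast hi2
      rcases abs_cases x with ⟨e,_⟩|⟨e,_⟩ <;> split_ifs <;> omega
  · constructor
    · intro x
      simp only [Equiv.swap_apply_def]
      split_ifs <;> omega
    · intro x hx
      simp only [Equiv.swap_apply_def]
      rcases abs_cases x with ⟨e,_⟩|⟨e,_⟩ <;> split_ifs <;> omega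

def SPsub (n : ℕ) : Subgroup (Equiv.Perm ℤ) where
  carrier := {u | isSP n u}
  mul_mem' := isSP_mul
  one_mem' := isSP_one n
  inv_mem' := isSP_inv

lemma closure_isSP {n : ℕ} {w : Equiv.Perm ℤ} (hw : w ∈ Subgroup.closure (genC n)) :
    isSP n w :=
  (Subgroup.closure_le (SPsub n)).2 (fun _ hg => isSP_gen hg) hw

/-! ### fB lemmas -/

lemma kap_inj {n : ℕ} {a b : ℤ} (ha : 1 ≤ |a|) (ha' : |a| ≤ n) (hb : 1 ≤ |b|)
    (hb' : |b| ≤ n) (h : kap n a = kap n b) : a = b := by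
  unfold kap at h
  rcases abs_cases a with ⟨e1,_⟩|⟨e1,_⟩ <;> rcases abs_cases b with ⟨e2,_⟩|⟨e2,_⟩ <;>
    split_ifs at h <;> omega

lemma fB_neg {n : ℕ} {a b : ℤ} (ha : 1 ≤ |a|) (ha' : |a| ≤ n) (hb : 1 ≤ |b|)
    (hb' : |b| ≤ n) (h1 : a ≠ b) (h2 : a ≠ -b) : fB n a (-b) = fB n a b := by
  unfold fB kap
  rcases abs_cases a with ⟨e1,_⟩|⟨e1,_⟩ <;> rcases abs_cases b with ⟨e2,_⟩|⟨e2,_⟩ <;>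
    split_ifs <;> omega

lemma fB_swap_lt {n : ℕ} {a b : ℤ} (h : kap n a < kap n b) :
    fB n b a = fB n a b + 1 := by
  unfold fB kap at *
  split_ifs at * <;> omega

/-! ### window transforms -/

lemma sgnSwap_window {i : ℕ} {x : ℤ} (hx : 1 ≤ x) :
    sgnSwap i x = Equiv.swap (i:ℤ) ((i:ℤ)+1) x := by
  simp only [sgnSwap, Equiv.Perm.mul_apply]
  congr 1
  rw [Equiv.swap_apply_of_ne_of_ne] <;> omega

lemma swap_mem_Icc {n i : ℕ} (h1 : 1 ≤ i) (h2 : i+1 ≤ n) (x : ℤ) :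
    x ∈ Finset.Icc (1:ℤ) n ↔ Equiv.swap (i:ℤ) ((i:ℤ)+1) x ∈ Finset.Icc (1:ℤ) n := by
  have e1 : 1 ≤ (i:ℤ) := by exact_mod_cast h1
  have e2 : (i:ℤ)+1 ≤ n := by exact_mod_cast h2
  simp only [Finset.mem_Icc, Equiv.swap_apply_def]
  split_ifs <;> omega

lemma TB_congr {n : ℕ} {v v' : ℤ → ℤ} {p : ℤ × ℤ} (h1 : v p.1 = v' p.1)
    (h2 : v p.2 = v' p.2) : TB n v p = TB n v' p := by
  unfold TB; rw [h1, h2]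

/-! ### two point sum helper -/

lemma sum_two_points {α : Type*} [DecidableEq α] (s : Finset α) (X Y : α → ℕ)
    (q1 q2 : α) (h1 : q1 ∈ s) (h2 : q2 ∈ s) (hq : q1 ≠ q2)
    (h : ∀ p ∈ s, p ≠ q1 → p ≠ q2 → X p = Y p) :
    ∑ p ∈ s, X p + (Y q1 + Y q2) = ∑ p ∈ s, Y p + (X q1 + X q2) := by
  classical
  have h2' : q2 ∈ s.erase q1 := Finset.mem_erase.2 ⟨Ne.symm hq, h2⟩
  have hX : ∑ p ∈ s, X p = X q1 + (X q2 + ∑ p ∈ (s.erase q1).erase q2, X p) := by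
    rw [Finset.add_sum_erase _ _ h2', Finset.add_sum_erase _ _ h1]
  have hY : ∑ p ∈ s, Y p = Y q1 + (Y q2 + ∑ p ∈ (s.erase q1).erase q2, Y p) := by
    rw [Finset.add_sum_erase _ _ h2', Finset.add_sum_erase _ _ h1]
  have hXY : ∑ p ∈ (s.erase q1).erase q2, X p = ∑ p ∈ (s.erase q1).erase q2, Y p := by
    apply Finset.sum_congr rfl
    intro p hp
    have hp2 := Finset.mem_erase.1 hp
    have hp1 := Finset.mem_erase.1 hp2.2
    exact h p hp1.2 hp1.1 hp2.1
  omega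

/-! ### Step lemma S1 -/

lemma step_adj_key {n : ℕ} {u : Equiv.Perm ℤ} (hu : isSP n u) (i : ℕ)
    (h1 : 1 ≤ i) (h2 : i + 1 ≤ n) :
    LB n (u * sgnSwap i) + fB n (u i) (u ((i:ℤ)+1))
      = LB n u + fB n (u ((i:ℤ)+1)) (u i) := by
  classical
  set σ := Equiv.swap (i:ℤ) ((i:ℤ)+1) with hσ
  have e1 : 1 ≤ (i:ℤ) := by exact_mod_cast h1
  have e2 : (i:ℤ)+1 ≤ n := by exact_mod_cast h2
  have hmem : ∀ x : ℤ, x ∈ Finset.Icc (1:ℤ) n → 1 ≤ x := by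
    intro x hx; exact (Finset.mem_Icc.1 hx).1
  -- step 1 : LB of u * sgnSwap i is the sum of TB of (u ∘ σ)
  have hstep1 : LB n (u * sgnSwap i) = ∑ p ∈ PP n, TB n (fun x => u (σ x)) p := by
    apply Finset.sum_congr rfl
    intro p hp
    simp only [PP, Finset.mem_product] at hp
    apply TB_congr
    · simp only [Equiv.Perm.mul_apply]
      rw [sgnSwap_window (hmem _ hp.1)]
    · simp only [Equiv.Perm.mul_apply]
      rw [sgnSwap_window (hmem _ hp.2)]
  -- step 2 : reindex by σ × σ
  have hstep2 : ∑ p ∈ PP n, TB n (fun x => u (σ x)) p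
      = ∑ p ∈ PP n, TB n (fun x => u (σ x)) (σ p.1, σ p.2) := by
    refine (Finset.sum_equiv (σ.prodCongr σ) ?_ ?_).symm
    · intro p
      simp only [PP, Finset.mem_product, Equiv.prodCongr_apply, Prod.map]
      rw [← swap_mem_Icc h1 h2 p.1, ← swap_mem_Icc h1 h2 p.2]
    · intro p _
      rfl
  rw [hstep1, hstep2]
  -- step 3 : compare pointwise off the two special points
  have hq1 : ((i:ℤ), (i:ℤ)+1) ∈ PP n := by
    simp only [PP, Finset.mem_product, Finset.mem_Icc]; omega
  have hq2 : ((i:ℤ)+1, (i:ℤ)) ∈ PP n := by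
    simp only [PP, Finset.mem_product, Finset.mem_Icc]; omega
  have hkey := sum_two_points (PP n)
    (fun p => TB n (fun x => u (σ x)) (σ p.1, σ p.2)) (fun p => TB n (⇑u) p)
    ((i:ℤ), (i:ℤ)+1) ((i:ℤ)+1, (i:ℤ)) hq1 hq2 (by simp [Prod.ext_iff]) ?_
  · -- compute the four special values
    have hσi : σ (i:ℤ) = (i:ℤ)+1 := Equiv.swap_apply_left _ _
    have hσi1 : σ ((i:ℤ)+1) = (i:ℤ) := Equiv.swap_apply_right _ _
    have hYq1 : TB n (⇑u) ((i:ℤ), (i:ℤ)+1) = fB n (u i) (u ((i:ℤ)+1)) := by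
      unfold TB; simp only []; rw [if_pos]; omega
    have hYq2 : TB n (⇑u) ((i:ℤ)+1, (i:ℤ)) = 0 := by
      unfold TB; simp only []
      rw [if_neg (by omega), if_neg (by omega)]
    have hXq1 : TB n (fun x => u (σ x)) (σ (i:ℤ), σ ((i:ℤ)+1)) = 0 := by
      rw [hσi, hσi1]; unfold TB; simp only []
      rw [if_neg (by omega), if_neg (by omega)]
    have hXq2 : TB n (fun x => u (σ x)) (σ ((i:ℤ)+1), σ (i:ℤ))
        = fB n (u ((i:ℤ)+1)) (u (i:ℤ)) := by
      rw [hσi, hσi1]; unfold TB; simp only []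
      rw [if_pos (by omega), hσi, hσi1]
    simp only at hkey
    rw [hXq1, hXq2, hYq1, hYq2] at hkey
    unfold LB
    omega
  · intro p hp hne1 hne2
    have hne1' : ¬(p.1 = (i:ℤ) ∧ p.2 = (i:ℤ)+1) := by
      intro ⟨a, b⟩; exact hne1 (Prod.ext a b)
    have hne2' : ¬(p.1 = (i:ℤ)+1 ∧ p.2 = (i:ℤ)) := by
      intro ⟨a, b⟩; exact hne2 (Prod.ext a b)
    unfold TB
    simp only [Equiv.swap_apply_self, hσ]
    simp only [Equiv.swap_apply_def]
    split_ifs <;> first | rfl | (exfalso; omega)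
lemma kap_ne {n : ℕ} {u : Equiv.Perm ℤ} (hu : isSP n u) {x y : ℤ}
    (hx : x ∈ Finset.Icc (1:ℤ) n) (hy : y ∈ Finset.Icc (1:ℤ) n) (hxy : x ≠ y) :
    kap n (u x) ≠ kap n (u y) := by
  intro h
  obtain ⟨hx1, hx2⟩ := isSP_window hu hx
  obtain ⟨hy1, hy2⟩ := isSP_window hu hy
  exact hxy (u.injective (kap_inj hx1 hx2 hy1 hy2 h))

lemma step_adj_lt {n : ℕ} {u : Equiv.Perm ℤ} (hu : isSP n u) (i : ℕ)
    (h1 : 1 ≤ i) (h2 : i + 1 ≤ n) (hlt : kap n (u i) < kap n (u ((i:ℤ)+1))) :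
    LB n (u * sgnSwap i) = LB n u + 1 := by
  have hk := step_adj_key hu i h1 h2
  rw [fB_swap_lt hlt] at hk
  omega

lemma step_adj_gt {n : ℕ} {u : Equiv.Perm ℤ} (hu : isSP n u) (i : ℕ)
    (h1 : 1 ≤ i) (h2 : i + 1 ≤ n) (hgt : kap n (u ((i:ℤ)+1)) < kap n (u i)) :
    LB n (u * sgnSwap i) + 1 = LB n u := by
  have hk := step_adj_key hu i h1 h2
  rw [fB_swap_lt hgt] at hk
  omega

lemma step_flip_key {n : ℕ} (hn : 1 ≤ n) {u : Equiv.Perm ℤ} (hu : isSP n u) :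
    LB n (u * Equiv.swap (n:ℤ) (-(n:ℤ))) + gB (u n)
      = LB n u + gB (-(u n)) := by
  classical
  set c := Equiv.swap (n:ℤ) (-(n:ℤ)) with hc
  have hn1 : 1 ≤ (n:ℤ) := by exact_mod_cast hn
  have hval : ∀ x : ℤ, 1 ≤ x → x ≠ (n:ℤ) → (u * c) x = u x := by
    intro x hx hxn
    simp only [Equiv.Perm.mul_apply, hc]
    rw [Equiv.swap_apply_of_ne_of_ne hxn (by omega)]
  have hvaln : (u * c) (n:ℤ) = -(u (n:ℤ)) := by
    simp only [Equiv.Perm.mul_apply, hc, Equiv.swap_apply_left]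
    exact hu.1 _
  have hnn : ((n:ℤ),(n:ℤ)) ∈ PP n := by
    simp only [PP, Finset.mem_product, Finset.mem_Icc]; omega
  have herase : ∀ p ∈ (PP n).erase ((n:ℤ),(n:ℤ)),
      TB n (⇑(u * c)) p = TB n (⇑u) p := by
    intro p hp
    have hpp := Finset.mem_erase.1 hp
    have hpm := hpp.2
    simp only [PP, Finset.mem_product, Finset.mem_Icc] at hpm
    have hne : ¬(p.1 = (n:ℤ) ∧ p.2 = (n:ℤ)) := by
      intro ⟨a, b⟩; exact hpp.1 (Prod.ext a b)
    by_cases hp2 : p.2 = (n:ℤ)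
    · have hp1 : p.1 ≠ (n:ℤ) := by tauto
      unfold TB
      rw [hval p.1 (by omega) hp1, hp2, hvaln]
      have hlt : p.1 < (n:ℤ) := by omega
      rw [if_pos hlt, if_pos hlt]
      have hw1 := isSP_window hu (x := p.1) (Finset.mem_Icc.2 ⟨by omega, by omega⟩)
      have hw2 := isSP_window hu (x := (n:ℤ)) (Finset.mem_Icc.2 ⟨by omega, by omega⟩)
      exact fB_neg hw1.1 hw1.2 hw2.1 hw2.2
        (fun h => hp1 (u.injective h))
        (fun h => by
          have h5 : u p.1 = u (-(n:ℤ)) := by rw [hu.1]; omega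
          have h6 := u.injective h5
          omega)
    · by_cases hp1 : p.1 = (n:ℤ)
      · unfold TB
        rw [if_neg (by omega), if_neg (by omega), if_neg (by omega), if_neg (by omega)]
      · unfold TB
        rw [hval p.1 (by omega) hp1, hval p.2 (by omega) hp2]
  have hTn : TB n (⇑(u * c)) ((n:ℤ),(n:ℤ)) = gB (-(u (n:ℤ))) := by
    unfold TB
    rw [if_neg (by omega), if_pos rfl, hvaln]
  have hTn' : TB n (⇑u) ((n:ℤ),(n:ℤ)) = gB (u (n:ℤ)) := by
    unfold TB
    rw [if_neg (by omega), if_pos rfl]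
  have hsum1 : LB n (u * c) = ∑ p ∈ (PP n).erase ((n:ℤ),(n:ℤ)), TB n (⇑(u*c)) p
      + gB (-(u (n:ℤ))) := by
    unfold LB
    rw [← Finset.sum_erase_add _ _ hnn, hTn]
  have hsum2 : LB n u = ∑ p ∈ (PP n).erase ((n:ℤ),(n:ℤ)), TB n (⇑u) p
      + gB (u (n:ℤ)) := by
    unfold LB
    rw [← Finset.sum_erase_add _ _ hnn, hTn']
  have hh : ∑ p ∈ (PP n).erase ((n:ℤ),(n:ℤ)), TB n (⇑(u*c)) p
      = ∑ p ∈ (PP n).erase ((n:ℤ),(n:ℤ)), TB n (⇑u) p :=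
    Finset.sum_congr rfl herase
  omega

lemma step_flip_neg {n : ℕ} (hn : 1 ≤ n) {u : Equiv.Perm ℤ} (hu : isSP n u)
    (h : u (n:ℤ) < 0) :
    LB n (u * Equiv.swap (n:ℤ) (-(n:ℤ))) + 1 = LB n u := by
  have hk := step_flip_key hn hu
  unfold gB at hk
  rw [if_pos h, if_neg (by omega)] at hk
  omega

lemma step_flip_pos {n : ℕ} (hn : 1 ≤ n) {u : Equiv.Perm ℤ} (hu : isSP n u)
    (h : 0 < u (n:ℤ)) :
    LB n (u * Equiv.swap (n:ℤ) (-(n:ℤ))) = LB n u + 1 := by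
  have hk := step_flip_key hn hu
  unfold gB at hk
  rw [if_neg (by omega), if_pos (by omega)] at hk
  omega
/-! ### word machinery -/

lemma gen_sq {n : ℕ} {g : Equiv.Perm ℤ} (hg : g ∈ genC n) : g * g = 1 := by
  rcases hg with ⟨i, _, _, rfl⟩ | rfl
  · have hcomm : Equiv.swap (-(i:ℤ)) (-((i:ℤ)+1)) * Equiv.swap (i:ℤ) ((i:ℤ)+1)
        = Equiv.swap (i:ℤ) ((i:ℤ)+1) * Equiv.swap (-(i:ℤ)) (-((i:ℤ)+1)) := by
      ext x
      simp only [Equiv.Perm.mul_apply, Equiv.swap_apply_def]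
      split_ifs <;> omega
    show (Equiv.swap (i:ℤ) ((i:ℤ)+1) * Equiv.swap (-(i:ℤ)) (-((i:ℤ)+1))) *
      (Equiv.swap (i:ℤ) ((i:ℤ)+1) * Equiv.swap (-(i:ℤ)) (-((i:ℤ)+1))) = 1
    rw [mul_assoc, ← mul_assoc (Equiv.swap (-(i:ℤ)) (-((i:ℤ)+1))), hcomm,
      mul_assoc, Equiv.swap_mul_self, mul_one, Equiv.swap_mul_self]
  · exact Equiv.swap_mul_self _ _

lemma gen_inv {n : ℕ} {g : Equiv.Perm ℤ} (hg : g ∈ genC n) : g⁻¹ = g :=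
  inv_eq_of_mul_eq_one_right (gen_sq hg)

lemma rev_prod {n : ℕ} : ∀ (L : List (Equiv.Perm ℤ)), (∀ g ∈ L, g ∈ genC n) →
    L.reverse.prod = L.prod⁻¹ := by
  intro L
  induction L with
  | nil => simp
  | cons a l ih =>
    intro h
    simp only [List.reverse_cons, List.prod_append, List.prod_cons, List.prod_nil,
      mul_one, mul_inv_rev]
    rw [ih (fun g hg => h g (List.mem_cons_of_mem _ hg)),
      gen_inv (h a List.mem_cons_self)]

lemma word_exists {n : ℕ} {w : Equiv.Perm ℤ} (hw : w ∈ Subgroup.closure (genC n)) :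
    ∃ L : List (Equiv.Perm ℤ), (∀ g ∈ L, g ∈ genC n) ∧ L.prod = w := by
  induction hw using Subgroup.closure_induction with
  | mem x hx => exact ⟨[x], by simpa using hx, by simp⟩
  | one => exact ⟨[], by simp, rfl⟩
  | mul x y hx hy ihx ihy =>
    obtain ⟨L1, h1, p1⟩ := ihx
    obtain ⟨L2, h2, p2⟩ := ihy
    refine ⟨L1 ++ L2, ?_, by rw [List.prod_append, p1, p2]⟩
    intro g hg
    rcases List.mem_append.1 hg with h | h
    exacts [h1 g h, h2 g h]
  | inv x hx ihx =>
    obtain ⟨L, h, p⟩ := ihx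
    exact ⟨L.reverse, fun g hg => h g (List.mem_reverse.1 hg),
      by rw [rev_prod L h, p]⟩

lemma wordLen_spec {n : ℕ} {w : Equiv.Perm ℤ} (hw : w ∈ Subgroup.closure (genC n)) :
    ∃ L : List (Equiv.Perm ℤ), L.length = wordLen (genC n) w ∧
      (∀ g ∈ L, g ∈ genC n) ∧ L.prod = w := by
  have hne : {k | ∃ L : List (Equiv.Perm ℤ), L.length = k ∧ (∀ g ∈ L, g ∈ genC n) ∧
      L.prod = w}.Nonempty := by
    obtain ⟨L, h1, h2⟩ := word_exists hw
    exact ⟨L.length, L, rfl, h1, h2⟩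
  exact Nat.sInf_mem hne

lemma wordLen_le_of_word {n : ℕ} {w : Equiv.Perm ℤ} {L : List (Equiv.Perm ℤ)}
    (h1 : ∀ g ∈ L, g ∈ genC n) (h2 : L.prod = w) :
    wordLen (genC n) w ≤ L.length :=
  Nat.sInf_le ⟨L, rfl, h1, h2⟩

lemma wordLen_one {n : ℕ} : wordLen (genC n) 1 = 0 :=
  Nat.le_zero.1 (wordLen_le_of_word (L := []) (by simp) rfl)

lemma wordLen_mul_le {n : ℕ} {w g : Equiv.Perm ℤ} (hw : w ∈ Subgroup.closure (genC n))
    (hg : g ∈ genC n) : wordLen (genC n) (w * g) ≤ wordLen (genC n) w + 1 := by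
  obtain ⟨L, hlen, hmem, hprod⟩ := wordLen_spec hw
  refine le_trans (wordLen_le_of_word (L := L ++ [g]) ?_ ?_) ?_
  · intro x hx
    rcases List.mem_append.1 hx with h | h
    · exact hmem x h
    · simp at h; subst h; exact hg
  · rw [List.prod_append, hprod, List.prod_cons, List.prod_nil, mul_one]
  · simp [hlen]

lemma wordLen_inv {n : ℕ} (w : Equiv.Perm ℤ) :
    wordLen (genC n) w⁻¹ = wordLen (genC n) w := by
  unfold wordLen
  congr 1
  ext k
  constructor
  · rintro ⟨L, hlen, hmem, hprod⟩
    exact ⟨L.reverse, by simp [hlen], fun g hg => hmem g (List.mem_reverse.1 hg),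
      by rw [rev_prod L hmem, hprod, inv_inv]⟩
  · rintro ⟨L, hlen, hmem, hprod⟩
    exact ⟨L.reverse, by simp [hlen], fun g hg => hmem g (List.mem_reverse.1 hg),
      by rw [rev_prod L hmem, hprod]⟩

/-! ### LB of one, and the lower bound -/

lemma LB_one {n : ℕ} : LB n (1 : Equiv.Perm ℤ) = 0 := by
  apply Finset.sum_eq_zero
  intro p hp
  simp only [PP, Finset.mem_product, Finset.mem_Icc] at hp
  unfold TB fB gB kap
  simp only [Equiv.Perm.one_apply]
  split_ifs <;> simp_all <;> omega

lemma LB_step_le {n : ℕ} (hn : 1 ≤ n) {u g : Equiv.Perm ℤ} (hu : isSP n u)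
    (hg : g ∈ genC n) : LB n (u * g) ≤ LB n u + 1 := by
  rcases hg with ⟨i, hi1, hi2, rfl⟩ | rfl
  · have h1 : ((i:ℤ) ∈ Finset.Icc (1:ℤ) n) := Finset.mem_Icc.2 ⟨by exact_mod_cast hi1, by
      have : (i:ℤ) + 1 ≤ n := by exact_mod_cast hi2
      omega⟩
    have h2 : ((i:ℤ)+1 ∈ Finset.Icc (1:ℤ) n) := Finset.mem_Icc.2 ⟨by
      have : 1 ≤ (i:ℤ) := by exact_mod_cast hi1
      omega, by exact_mod_cast hi2⟩
    have hne := kap_ne hu h1 h2 (by omega)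
    rcases lt_or_gt_of_ne hne with h | h
    · rw [step_adj_lt hu i hi1 hi2 h]
    · have := step_adj_gt hu i hi1 hi2 h
      omega
  · have hnz : u (n:ℤ) ≠ 0 := isSP_ne_zero hu (by positivity)
    rcases hnz.lt_or_gt with h | h
    · have := step_flip_neg hn hu h
      omega
    · rw [step_flip_pos hn hu h]

lemma LB_le_word {n : ℕ} (hn : 1 ≤ n) :
    ∀ (L : List (Equiv.Perm ℤ)), (∀ g ∈ L, g ∈ genC n) → LB n L.prod ≤ L.length := by
  intro L
  induction L using List.reverseRecOn with
  | nil => simp [LB_one]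
  | append_singleton l g ih =>
    intro h
    have hl : ∀ x ∈ l, x ∈ genC n := fun x hx => h x (by simp [hx])
    have hg : g ∈ genC n := h g (by simp)
    have hsp : isSP n l.prod := by
      have : l.prod ∈ Subgroup.closure (genC n) :=
        Subgroup.list_prod_mem _ (fun x hx => Subgroup.subset_closure (hl x hx))
      exact closure_isSP this
    rw [List.prod_append, List.prod_cons, List.prod_nil, mul_one]
    calc LB n (l.prod * g) ≤ LB n l.prod + 1 := LB_step_le hn hsp hg
    _ ≤ l.length + 1 := by have := ih hl; omega
    _ = (l ++ [g]).length := by simp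

lemma LB_le_wordLen {n : ℕ} (hn : 1 ≤ n) {w : Equiv.Perm ℤ}
    (hw : w ∈ Subgroup.closure (genC n)) : LB n w ≤ wordLen (genC n) w := by
  obtain ⟨L, hlen, hmem, hprod⟩ := wordLen_spec hw
  rw [← hlen, ← hprod]
  exact LB_le_word hn L hmem
/-! ### kap monotone helpers -/

lemma kap_mono_of_adj {n : ℕ} {h : ℤ → ℤ}
    (hadj : ∀ i : ℤ, 1 ≤ i → i + 1 ≤ n → h i < h (i+1)) :
    ∀ i j : ℤ, 1 ≤ i → i < j → j ≤ n → h i < h j := by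
  intro i j hi hij hj
  have key : ∀ m : ℤ, i + 1 ≤ m → (m ≤ n → h i < h m) := by
    refine Int.le_induction ?_ ?_
    · intro hb; exact hadj i hi hb
    · intro m hm ih hb
      have h1 : h i < h m := ih (by omega)
      have h2 : h m < h (m+1) := hadj m (by omega) hb
      omega
  exact key j (by omega) hj

/-! ### the main induction : isSP implies closure membership and wordLen = LB -/

lemma main_ind {n : ℕ} (hn : 1 ≤ n) :
    ∀ k : ℕ, ∀ u : Equiv.Perm ℤ, isSP n u → LB n u = k →
      u ∈ Subgroup.closure (genC n) ∧ wordLen (genC n) u ≤ k := by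
  intro k
  induction k using Nat.strong_induction_on with
  | _ k IH =>
  intro u hu hLB
  by_cases hdesc : ∃ i : ℕ, 1 ≤ i ∧ i+1 ≤ n ∧ kap n (u ((i:ℤ)+1)) < kap n (u (i:ℤ))
  · obtain ⟨i, hi1, hi2, hlt⟩ := hdesc
    have hgen : sgnSwap i ∈ genC n := Or.inl ⟨i, hi1, hi2, rfl⟩
    have hsp' : isSP n (u * sgnSwap i) := isSP_mul hu (isSP_gen hgen)
    have hstep := step_adj_gt hu i hi1 hi2 hlt
    have hIH := IH (LB n (u * sgnSwap i)) (by omega) _ hsp' rfl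
    have huu : (u * sgnSwap i) * sgnSwap i = u := by
      rw [mul_assoc, gen_sq hgen, mul_one]
    have hcl : u ∈ Subgroup.closure (genC n) := by
      rw [← huu]
      exact mul_mem hIH.1 (Subgroup.subset_closure hgen)
    have hwl := wordLen_mul_le hIH.1 hgen
    rw [huu] at hwl
    exact ⟨hcl, by omega⟩
  · by_cases hneg : u (n:ℤ) < 0
    · have hgen : Equiv.swap (n:ℤ) (-(n:ℤ)) ∈ genC n := Or.inr rfl
      have hsp' : isSP n (u * Equiv.swap (n:ℤ) (-(n:ℤ))) := isSP_mul hu (isSP_gen hgen)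
      have hstep := step_flip_neg hn hu hneg
      have hIH := IH (LB n (u * Equiv.swap (n:ℤ) (-(n:ℤ)))) (by omega) _ hsp' rfl
      have huu : (u * Equiv.swap (n:ℤ) (-(n:ℤ))) * Equiv.swap (n:ℤ) (-(n:ℤ)) = u := by
        rw [mul_assoc, gen_sq hgen, mul_one]
      have hcl : u ∈ Subgroup.closure (genC n) := by
        rw [← huu]
        exact mul_mem hIH.1 (Subgroup.subset_closure hgen)
      have hwl := wordLen_mul_le hIH.1 hgen
      rw [huu] at hwl
      exact ⟨hcl, by omega⟩
    · -- u is the identity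
      push_neg at hdesc
      have hadj : ∀ i : ℤ, 1 ≤ i → i + 1 ≤ n → kap n (u i) < kap n (u (i+1)) := by
        intro i hi1 hi2
        have hi' : i = ((i.toNat : ℕ) : ℤ) := by omega
        have h1 : (i.toNat : ℤ) ∈ Finset.Icc (1:ℤ) n := Finset.mem_Icc.2 (by omega)
        have h2 : (i.toNat : ℤ)+1 ∈ Finset.Icc (1:ℤ) n := Finset.mem_Icc.2 (by omega)
        have hne := kap_ne hu h1 h2 (by omega)
        have := hdesc i.toNat (by omega) (by omega)
        rw [hi']
        omega
      have hmono := kap_mono_of_adj hadj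
      have hpos : ∀ j : ℤ, 1 ≤ j → j ≤ n → 0 < u j := by
        intro j hj1 hj2
        by_contra hcon
        push_neg at hcon
        have hjn : u j ≠ 0 := isSP_ne_zero hu (by omega)
        have hwin := isSP_window hu (x := j) (Finset.mem_Icc.2 ⟨hj1, hj2⟩)
        have hwinn := isSP_window hu (x := (n:ℤ)) (Finset.mem_Icc.2 (by omega))
        have hjltn : j ≠ (n:ℤ) := by
          intro h; rw [h] at hcon hjn; omega
        have hm := hmono j (n:ℤ) hj1 (by omega) le_rfl
        have hun : 0 < u (n:ℤ) := by
          rcases (isSP_ne_zero hu (show (n:ℤ) ≠ 0 by omega)).lt_or_gt with h | h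
          · omega
          · exact h
        unfold kap at hm
        rw [if_neg (by omega), if_pos hun] at hm
        rcases abs_cases (u j) with ⟨e,_⟩|⟨e,_⟩ <;> rcases abs_cases (u (n:ℤ)) with ⟨e2,_⟩|⟨e2,_⟩ <;>
          omega
      have hval_ge : ∀ j : ℤ, 1 ≤ j → j ≤ n → j ≤ u j := by
        refine Int.le_induction ?_ ?_
        · intro h; exact hpos 1 le_rfl h
        · intro j hj ih hjn
          have h1 : j ≤ u j := ih (by omega)
          have h2 := hmono j (j+1) hj (by omega) hjn
          have p1 := hpos j hj (by omega)
          have p2 := hpos (j+1) (by omega) hjn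
          unfold kap at h2
          rw [if_pos p1, if_pos p2] at h2
          omega
      have hval_le : ∀ j : ℤ, j ≤ n → 1 ≤ j → u j ≤ j := by
        refine Int.le_induction_down ?_ ?_
        · intro h
          have hwinn := isSP_window hu (x := (n:ℤ)) (Finset.mem_Icc.2 (by omega))
          have := hpos (n:ℤ) (by omega) le_rfl
          rcases abs_cases (u (n:ℤ)) with ⟨e,_⟩|⟨e,_⟩ <;> omega
        · intro j hj ih hj1
          have h2 := hmono (j-1) j hj1 (by omega) hj
          have p1 := hpos (j-1) hj1 (by omega)
          have p2 := hpos j (by omega) hj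
          have h3 : u j ≤ j := ih (by omega)
          unfold kap at h2
          rw [if_pos p1, if_pos p2] at h2
          omega
      have huid : u = 1 := by
        ext x
        simp only [Equiv.Perm.one_apply]
        rcases le_or_gt x (-1) with hx | hx
        · rcases le_or_gt (-(n:ℤ)) x with hx2 | hx2
          · have h1 : u (-x) = -x := by
              have := hval_ge (-x) (by omega) (by omega)
              have := hval_le (-x) (by omega) (by omega)
              omega
            have := hu.1 (-x)
            rw [h1] at this
            simp at this
            omega
          · exact hu.2 x (by rcases abs_cases x with ⟨e,_⟩|⟨e,_⟩ <;> omega)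
        · rcases le_or_gt x 0 with hx0 | hx0
          · have : x = 0 := by omega
            rw [this]
            exact isSP_zero hu
          · rcases le_or_gt x (n:ℤ) with hx2 | hx2
            · have := hval_ge x (by omega) hx2
              have := hval_le x hx2 (by omega)
              omega
            · exact hu.2 x (by rcases abs_cases x with ⟨e,_⟩|⟨e,_⟩ <;> omega)
      subst huid
      rw [LB_one] at hLB
      exact ⟨one_mem _, by rw [wordLen_one]; omega⟩

lemma isSP_iff_closure {n : ℕ} (hn : 1 ≤ n) {u : Equiv.Perm ℤ} :
    isSP n u ↔ u ∈ Subgroup.closure (genC n) :=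
  ⟨fun hu => (main_ind hn (LB n u) u hu rfl).1, closure_isSP⟩

lemma wordLen_eq_LB {n : ℕ} (hn : 1 ≤ n) {u : Equiv.Perm ℤ} (hu : isSP n u) :
    wordLen (genC n) u = LB n u := by
  have h1 := (main_ind hn (LB n u) u hu rfl).2
  have h2 := LB_le_wordLen hn ((isSP_iff_closure hn).1 hu)
  omega
/-! ### descent characterization -/

lemma adj_of_nat {n : ℕ} {u : Equiv.Perm ℤ} (hu : isSP n u)
    (hadj : ∀ i : ℕ, 1 ≤ i → i+1 ≤ n → kap n (u (i:ℤ)) < kap n (u ((i:ℤ)+1))) :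
    ∀ i : ℤ, 1 ≤ i → i + 1 ≤ n → kap n (u i) < kap n (u (i+1)) := by
  intro i hi1 hi2
  have hi' : i = ((i.toNat : ℕ) : ℤ) := by omega
  rw [hi']
  exact hadj i.toNat (by omega) (by omega)

lemma descent_iff_one {n : ℕ} (hn : 1 ≤ n) {w : Equiv.Perm ℤ}
    (hw : w ∈ Subgroup.closure (genC n)) (i : ℕ) (hi1 : 1 ≤ i) (hi2 : i + 1 ≤ n) :
    (wordLen (genC n) w < wordLen (genC n) (sgnSwap i * w))
      ↔ kap n (w⁻¹ (i:ℤ)) < kap n (w⁻¹ ((i:ℤ)+1)) := by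
  have hgen : sgnSwap i ∈ genC n := Or.inl ⟨i, hi1, hi2, rfl⟩
  have hu : isSP n w⁻¹ := isSP_inv (closure_isSP hw)
  have husi : isSP n (w⁻¹ * sgnSwap i) := isSP_mul hu (isSP_gen hgen)
  have hinv : (sgnSwap i * w)⁻¹ = w⁻¹ * sgnSwap i := by
    rw [mul_inv_rev, gen_inv hgen]
  have h1 : wordLen (genC n) (sgnSwap i * w) = LB n (w⁻¹ * sgnSwap i) := by
    rw [← wordLen_inv, hinv, wordLen_eq_LB hn husi]
  have h2 : wordLen (genC n) w = LB n w⁻¹ := by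
    rw [← wordLen_inv, wordLen_eq_LB hn hu]
  rw [h1, h2]
  have hc1 : 1 ≤ (i:ℤ) := by exact_mod_cast hi1
  have hc2 : (i:ℤ)+1 ≤ n := by exact_mod_cast hi2
  have hmem1 : ((i:ℤ) ∈ Finset.Icc (1:ℤ) n) := Finset.mem_Icc.2 ⟨by omega, by omega⟩
  have hmem2 : ((i:ℤ)+1 ∈ Finset.Icc (1:ℤ) n) := Finset.mem_Icc.2 ⟨by omega, by omega⟩
  constructor
  · intro h
    rcases lt_or_gt_of_ne (kap_ne hu hmem1 hmem2 (by omega)) with hlt | hgt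
    · exact hlt
    · have := step_adj_gt hu i hi1 hi2 hgt
      omega
  · intro h
    rw [step_adj_lt hu i hi1 hi2 h]
    omega

/-! ### counting lemma -/

lemma card_abs_gt {n : ℕ} {u : Equiv.Perm ℤ} (hu : isSP n u) {a : ℤ}
    (ha0 : 0 ≤ a) (han : a ≤ n) :
    ((Finset.Icc (1:ℤ) n).filter (fun i => a < |u i|)).card = ((n:ℤ) - a).toNat := by
  have huinv : isSP n u⁻¹ := isSP_inv hu
  have hcard : ((Finset.Icc (1:ℤ) n).filter (fun i => a < |u i|)).card
      = (Finset.Icc (a+1) (n:ℤ)).card := by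
    apply Finset.card_nbij' (fun i => |u i|) (fun b => |u⁻¹ b|)
    · intro x hx
      simp only [Finset.mem_coe, Finset.mem_filter] at hx
      have hw := isSP_window hu hx.1
      beta_reduce
      exact Finset.mem_Icc.2 ⟨by omega, hw.2⟩
    · intro b hb
      simp only [Finset.mem_coe, Finset.mem_Icc] at hb
      have hb' : |b| ≤ (n:ℤ) := by rw [abs_le]; omega
      have hw := isSP_abs_le huinv hb'
      have hnz : u⁻¹ b ≠ 0 := isSP_ne_zero huinv (by omega)
      simp only [Finset.mem_coe, Finset.mem_filter, Finset.mem_Icc]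
      have hb1 : 1 ≤ |u⁻¹ b| := by
        rcases abs_cases (u⁻¹ b) with ⟨e,_⟩|⟨e,_⟩ <;> omega
      refine ⟨⟨hb1, hw⟩, ?_⟩
      rcases abs_cases (u⁻¹ b) with ⟨e, he⟩ | ⟨e, he⟩
      · rw [e, Equiv.Perm.apply_inv_self]
        rcases abs_cases b with ⟨e2,_⟩|⟨e2,_⟩ <;> omega
      · rw [e]
        have h5 : u (-(u⁻¹ b)) = -b := by rw [hu.1, Equiv.Perm.apply_inv_self]
        rw [h5, abs_neg]
        rcases abs_cases b with ⟨e2,_⟩|⟨e2,_⟩ <;> omega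
    · intro x hx
      simp only [Finset.mem_coe, Finset.mem_filter, Finset.mem_Icc] at hx
      beta_reduce
      rcases abs_cases (u x) with ⟨e, he⟩ | ⟨e, he⟩
      · rw [e, Equiv.Perm.inv_apply_self]
        rcases abs_cases x with ⟨e2,_⟩|⟨e2,_⟩ <;> omega
      · rw [e]
        have h5 : u⁻¹ (-(u x)) = -x := by
          rw [huinv.1, Equiv.Perm.inv_apply_self]
        rw [h5, abs_neg]
        rcases abs_cases x with ⟨e2,_⟩|⟨e2,_⟩ <;> omega
    · intro b hb
      simp only [Finset.mem_coe, Finset.mem_Icc] at hb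
      beta_reduce
      rcases abs_cases (u⁻¹ b) with ⟨e, he⟩ | ⟨e, he⟩
      · rw [e, Equiv.Perm.apply_inv_self]
        rcases abs_cases b with ⟨e2,_⟩|⟨e2,_⟩ <;> omega
      · rw [e]
        have h5 : u (-(u⁻¹ b)) = -b := by
          rw [hu.1, Equiv.Perm.apply_inv_self]
        rw [h5, abs_neg]
        rcases abs_cases b with ⟨e2,_⟩|⟨e2,_⟩ <;> omega
  rw [hcard, Int.card_Icc]
  congr 1
  omega
/-! ### LB formula for kappa-increasing permutations -/

lemma LB_kinc {n : ℕ} {u : Equiv.Perm ℤ} (hu : isSP n u)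
    (hk : ∀ i j : ℤ, 1 ≤ i → i < j → j ≤ n → kap n (u i) < kap n (u j)) :
    (LB n u : ℤ)
      = ∑ j ∈ (Finset.Icc (1:ℤ) n).filter (fun j => u j < 0), ((n:ℤ) + 1 + u j) := by
  classical
  have hcol : ∀ j ∈ Finset.Icc (1:ℤ) n,
      ((∑ i ∈ Finset.Icc (1:ℤ) n, TB n (⇑u) (i, j) : ℕ) : ℤ)
        = if u j < 0 then (n:ℤ) + 1 + u j else 0 := by
    intro j hj
    have hwj := isSP_window hu hj
    have hj' := hj
    simp only [Finset.mem_Icc] at hj'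
    by_cases hneg : u j < 0
    · rw [if_pos hneg]
      have hterm : ∀ i ∈ Finset.Icc (1:ℤ) n,
          TB n (⇑u) (i, j) = if -(u j) < |u i| ∨ i = j then 1 else 0 := by
        intro i hi
        have hwi := isSP_window hu hi
        simp only [Finset.mem_Icc] at hi
        rcases lt_trichotomy i j with h | h | h
        · have hk' := hk i j (by omega) h (by omega)
          simp only [TB, fB, gB, kap] at hk' ⊢
          rcases abs_cases (u i) with ⟨e,_⟩|⟨e,_⟩ <;>
            rcases abs_cases (u j) with ⟨e2,_⟩|⟨e2,_⟩ <;>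
            split_ifs at hk' ⊢ <;> omega
        · subst h
          have ht : TB n (⇑u) (i, i) = gB (u i) := by
            simp [TB]
          rw [ht, if_pos (Or.inr rfl)]
          simp [gB, hneg]
        · have hk' := hk j i (by omega) h (by omega)
          simp only [TB, fB, gB, kap] at hk' ⊢
          rcases abs_cases (u i) with ⟨e,_⟩|⟨e,_⟩ <;>
            rcases abs_cases (u j) with ⟨e2,_⟩|⟨e2,_⟩ <;>
            split_ifs at hk' ⊢ <;> omega
      rw [Finset.sum_congr rfl hterm, Finset.sum_boole]
      have hins : (Finset.Icc (1:ℤ) n).filter (fun i => -(u j) < |u i| ∨ i = j)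
          = insert j ((Finset.Icc (1:ℤ) n).filter (fun i => -(u j) < |u i|)) := by
        ext x
        simp only [Finset.mem_filter, Finset.mem_insert, Finset.mem_Icc]
        constructor
        · rintro ⟨hx, h | h⟩
          exacts [Or.inr ⟨hx, h⟩, Or.inl h]
        · rintro (h | ⟨hx, h⟩)
          · subst h; exact ⟨by omega, Or.inr rfl⟩
          · exact ⟨hx, Or.inl h⟩
      have hnotmem : j ∉ (Finset.Icc (1:ℤ) n).filter (fun i => -(u j) < |u i|) := by
        simp only [Finset.mem_filter, Finset.mem_Icc]
        rintro ⟨_, h⟩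
        rcases abs_cases (u j) with ⟨e,_⟩|⟨e,_⟩ <;> omega
      rw [hins, Finset.card_insert_of_notMem hnotmem,
        card_abs_gt hu (a := -(u j)) (by omega) (by
          rcases abs_cases (u j) with ⟨e,_⟩|⟨e,_⟩ <;> omega)]
      have hnn : (0:ℤ) ≤ (n:ℤ) - -(u j) := by
        rcases abs_cases (u j) with ⟨e,_⟩|⟨e,_⟩ <;> omega
      push_cast [Int.toNat_of_nonneg hnn]
      ring
    · rw [if_neg hneg]
      have hpos : 0 < u j := by
        have := isSP_ne_zero hu (show j ≠ 0 by omega)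
        omega
      have hzero : ∀ i ∈ Finset.Icc (1:ℤ) n, TB n (⇑u) (i, j) = 0 := by
        intro i hi
        have hwi := isSP_window hu hi
        simp only [Finset.mem_Icc] at hi
        rcases lt_trichotomy i j with h | h | h
        · have hk' := hk i j (by omega) h (by omega)
          simp only [TB, fB, gB, kap] at hk' ⊢
          rcases abs_cases (u i) with ⟨e,_⟩|⟨e,_⟩ <;>
            rcases abs_cases (u j) with ⟨e2,_⟩|⟨e2,_⟩ <;>
            split_ifs at hk' ⊢ <;> omega
        · subst h
          have ht : TB n (⇑u) (i, i) = gB (u i) := by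
            simp [TB]
          rw [ht]
          simp only [gB]
          rw [if_neg (by omega)]
        · simp only [TB, fB, gB, kap]
          split_ifs <;> omega
      rw [Finset.sum_congr rfl hzero]
      simp
  have h0 : LB n u = ∑ j ∈ Finset.Icc (1:ℤ) n, ∑ i ∈ Finset.Icc (1:ℤ) n,
      TB n (⇑u) (i, j) := by
    unfold LB PP
    rw [Finset.sum_product]
    exact Finset.sum_comm
  calc (LB n u : ℤ)
      = ∑ j ∈ Finset.Icc (1:ℤ) n, ((∑ i ∈ Finset.Icc (1:ℤ) n, TB n (⇑u) (i,j) : ℕ) : ℤ) := by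
        rw [h0]; push_cast; ring
    _ = ∑ j ∈ Finset.Icc (1:ℤ) n, (if u j < 0 then (n:ℤ)+1+u j else 0) :=
        Finset.sum_congr rfl hcol
    _ = ∑ j ∈ (Finset.Icc (1:ℤ) n).filter (fun j => u j < 0), ((n:ℤ) + 1 + u j) :=
        (Finset.sum_filter _ _).symm
/-! ### uniqueness of sorted sequences -/

lemma sorted_unique : ∀ (m : ℕ) (f g : ℤ → ℤ),
    StrictMonoOn f (Set.Icc (1:ℤ) (m:ℤ)) → StrictMonoOn g (Set.Icc (1:ℤ) (m:ℤ)) →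
    (Finset.Icc (1:ℤ) (m:ℤ)).image f = (Finset.Icc (1:ℤ) (m:ℤ)).image g →
    ∀ i ∈ Finset.Icc (1:ℤ) (m:ℤ), f i = g i := by
  intro m
  induction m with
  | zero =>
    intro f g _ _ _ i hi
    simp only [Finset.mem_Icc, Nat.cast_zero] at hi
    omega
  | succ m ih =>
    intro f g hf hg himg i hi
    have hM : ((m+1:ℕ):ℤ) = (m:ℤ)+1 := by push_cast; ring
    rw [hM] at hf hg himg hi
    have hicc : Finset.Icc (1:ℤ) ((m:ℤ)+1) = insert ((m:ℤ)+1) (Finset.Icc (1:ℤ) (m:ℤ)) := by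
      ext x
      simp only [Finset.mem_Icc, Finset.mem_insert]
      omega
    have htopmem : ((m:ℤ)+1) ∈ Finset.Icc (1:ℤ) ((m:ℤ)+1) := Finset.mem_Icc.2 (by omega)
    have hmemS : ∀ x : ℤ, x ∈ Finset.Icc (1:ℤ) ((m:ℤ)+1) → x ∈ Set.Icc (1:ℤ) ((m:ℤ)+1) := by
      intro x hx
      simp only [Finset.mem_Icc] at hx
      exact Set.mem_Icc.2 hx
    have hfle : ∀ x ∈ Finset.Icc (1:ℤ) ((m:ℤ)+1), f x ≤ f ((m:ℤ)+1) := by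
      intro x hx
      have hx' := Finset.mem_Icc.1 hx
      rcases eq_or_lt_of_le hx'.2 with h | h
      · rw [h]
      · exact le_of_lt (hf (hmemS x hx) (hmemS _ htopmem) h)
    have hgle : ∀ x ∈ Finset.Icc (1:ℤ) ((m:ℤ)+1), g x ≤ g ((m:ℤ)+1) := by
      intro x hx
      have hx' := Finset.mem_Icc.1 hx
      rcases eq_or_lt_of_le hx'.2 with h | h
      · rw [h]
      · exact le_of_lt (hg (hmemS x hx) (hmemS _ htopmem) h)
    have h1 : f ((m:ℤ)+1) ≤ g ((m:ℤ)+1) := by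
      have : f ((m:ℤ)+1) ∈ (Finset.Icc (1:ℤ) ((m:ℤ)+1)).image g := by
        rw [← himg]
        exact Finset.mem_image_of_mem f htopmem
      obtain ⟨y, hy, hgy⟩ := Finset.mem_image.1 this
      rw [← hgy]
      exact hgle y hy
    have h2 : g ((m:ℤ)+1) ≤ f ((m:ℤ)+1) := by
      have : g ((m:ℤ)+1) ∈ (Finset.Icc (1:ℤ) ((m:ℤ)+1)).image f := by
        rw [himg]
        exact Finset.mem_image_of_mem g htopmem
      obtain ⟨y, hy, hfy⟩ := Finset.mem_image.1 this
      rw [← hfy]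
      exact hfle y hy
    have htop : f ((m:ℤ)+1) = g ((m:ℤ)+1) := le_antisymm h1 h2
    have hnf : f ((m:ℤ)+1) ∉ (Finset.Icc (1:ℤ) (m:ℤ)).image f := by
      intro hmem
      obtain ⟨x, hx, hfx⟩ := Finset.mem_image.1 hmem
      have hx' := Finset.mem_Icc.1 hx
      have : f x < f ((m:ℤ)+1) :=
        hf (Set.mem_Icc.2 (by omega)) (Set.mem_Icc.2 (by omega)) (by omega)
      omega
    have hng : g ((m:ℤ)+1) ∉ (Finset.Icc (1:ℤ) (m:ℤ)).image g := by
      intro hmem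
      obtain ⟨x, hx, hgx⟩ := Finset.mem_image.1 hmem
      have hx' := Finset.mem_Icc.1 hx
      have : g x < g ((m:ℤ)+1) :=
        hg (Set.mem_Icc.2 (by omega)) (Set.mem_Icc.2 (by omega)) (by omega)
      omega
    have himg' : (Finset.Icc (1:ℤ) (m:ℤ)).image f = (Finset.Icc (1:ℤ) (m:ℤ)).image g := by
      have hbf : (Finset.Icc (1:ℤ) ((m:ℤ)+1)).image f
          = insert (f ((m:ℤ)+1)) ((Finset.Icc (1:ℤ) (m:ℤ)).image f) := by
        rw [hicc, Finset.image_insert]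
      have hbg : (Finset.Icc (1:ℤ) ((m:ℤ)+1)).image g
          = insert (g ((m:ℤ)+1)) ((Finset.Icc (1:ℤ) (m:ℤ)).image g) := by
        rw [hicc, Finset.image_insert]
      rw [hbf, hbg, htop] at himg
      calc (Finset.Icc (1:ℤ) (m:ℤ)).image f
          = (insert (g ((m:ℤ)+1)) ((Finset.Icc (1:ℤ) (m:ℤ)).image f)).erase (g ((m:ℤ)+1)) :=
            (Finset.erase_insert (htop ▸ hnf)).symm
        _ = (insert (g ((m:ℤ)+1)) ((Finset.Icc (1:ℤ) (m:ℤ)).image g)).erase (g ((m:ℤ)+1)) := by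
            rw [himg]
        _ = (Finset.Icc (1:ℤ) (m:ℤ)).image g := Finset.erase_insert hng
    have hsub : Set.Icc (1:ℤ) (m:ℤ) ⊆ Set.Icc (1:ℤ) ((m:ℤ)+1) :=
      Set.Icc_subset_Icc_right (by omega)
    rw [hicc] at hi
    rcases Finset.mem_insert.1 hi with h | h
    · rw [h]; exact htop
    · exact ih f g (hf.mono hsub) (hg.mono hsub) himg' i h

/-! ### construction of the sorted signed permutation -/

lemma exists_sorted (n : ℕ) (hn : 1 ≤ n) (Tz : Finset ℤ)
    (hT : ∀ a ∈ Tz, 1 ≤ a ∧ a ≤ (n:ℤ)) :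
    ∃ u : Equiv.Perm ℤ, isSP n u ∧
      (∀ i j : ℤ, 1 ≤ i → i < j → j ≤ (n:ℤ) → kap n (u i) < kap n (u j)) ∧
      (∀ a : ℤ, 1 ≤ a → a ≤ (n:ℤ) → (u⁻¹ a < 0 ↔ a ∈ Tz)) := by
  classical
  have hn0 : 0 < n := hn
  -- the signed value function and value set
  set sg : ℤ → ℤ := fun a => if a ∈ Tz then -a else a with hsg
  set V : Finset ℤ := (Finset.Icc (1:ℤ) n).image sg with hV
  have hsg_injOn : Set.InjOn sg (Finset.Icc (1:ℤ) n) := by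
    intro a ha b hb hab
    simp only [Finset.coe_Icc, Set.mem_Icc] at ha hb
    simp only [hsg] at hab
    split_ifs at hab <;> omega
  have hIccCard : (Finset.Icc (1:ℤ) n).card = n := by
    rw [Int.card_Icc]
    omega
  have hVcard : V.card = n := by
    rw [hV, Finset.card_image_of_injOn hsg_injOn, hIccCard]
  have hVbound : ∀ v ∈ V, 1 ≤ |v| ∧ |v| ≤ (n:ℤ) := by
    intro v hv
    obtain ⟨a, ha, rfl⟩ := Finset.mem_image.1 hv
    simp only [Finset.mem_Icc] at ha
    simp only [hsg]
    split_ifs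
    · rw [abs_neg, abs_of_nonneg (by omega)]
      omega
    · rw [abs_of_nonneg (by omega)]
      omega
  have hVnotneg : ∀ v ∈ V, -v ∉ V := by
    intro v hv hnv
    obtain ⟨a, ha, hva⟩ := Finset.mem_image.1 hv
    obtain ⟨b, hb, hvb⟩ := Finset.mem_image.1 hnv
    simp only [Finset.mem_Icc] at ha hb
    simp only [hsg] at hva hvb
    by_cases ha1 : a ∈ Tz
    · rw [if_pos ha1] at hva
      by_cases hb1 : b ∈ Tz
      · rw [if_pos hb1] at hvb
        omega
      · rw [if_neg hb1] at hvb
        have : a = b := by omega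
        subst this
        exact hb1 ha1
    · rw [if_neg ha1] at hva
      by_cases hb1 : b ∈ Tz
      · rw [if_pos hb1] at hvb
        have : a = b := by omega
        subst this
        exact ha1 hb1
      · rw [if_neg hb1] at hvb
        omega
  -- the kappa image
  set W : Finset ℤ := V.image (kap n) with hW
  have hkap_injOn : Set.InjOn (kap n) V := by
    intro a ha b hb hab
    have ha' := hVbound a ha
    have hb' := hVbound b hb
    exact kap_inj ha'.1 ha'.2 hb'.1 hb'.2 hab
  have hWcard : W.card = n := by
    rw [hW, Finset.card_image_of_injOn hkap_injOn, hVcard]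
  set e := W.orderIsoOfFin hWcard with he
  -- inverse of kappa
  set kinv : ℤ → ℤ := fun y => if y ≤ n then y else y - (2*n+1) with hkinv
  have hkinv_kap : ∀ v : ℤ, 1 ≤ |v| → |v| ≤ (n:ℤ) → kinv (kap n v) = v := by
    intro v h1 h2
    simp only [hkinv, kap]
    rcases abs_cases v with ⟨e1,_⟩|⟨e1,_⟩ <;> split_ifs <;> omega
  -- the value-at-position function
  set val : ℤ → ℤ := fun i => kinv ((e ⟨(i-1).toNat % n, Nat.mod_lt _ hn0⟩ : W) : ℤ)
    with hval
  have hval_mem : ∀ i : ℤ, val i ∈ V ∧ kap n (val i)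
      = ((e ⟨(i-1).toNat % n, Nat.mod_lt _ hn0⟩ : W) : ℤ) := by
    intro i
    have hmem : ((e ⟨(i-1).toNat % n, Nat.mod_lt _ hn0⟩ : W) : ℤ) ∈ W :=
      (e ⟨(i-1).toNat % n, Nat.mod_lt _ hn0⟩).2
    obtain ⟨v, hv, hkv⟩ := Finset.mem_image.1 hmem
    have hb := hVbound v hv
    have : val i = v := by
      simp only [hval]
      rw [← hkv, hkinv_kap v hb.1 hb.2]
    rw [this, ← hkv]
    exact ⟨hv, rfl⟩
  have hval_mono : ∀ i j : ℤ, 1 ≤ i → i < j → j ≤ (n:ℤ) →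
      kap n (val i) < kap n (val j) := by
    intro i j hi hij hj
    rw [(hval_mem i).2, (hval_mem j).2]
    have hlt : (⟨(i-1).toNat % n, Nat.mod_lt _ hn0⟩ : Fin n)
        < ⟨(j-1).toNat % n, Nat.mod_lt _ hn0⟩ := by
      have h1 : (i-1).toNat % n = (i-1).toNat := Nat.mod_eq_of_lt (by omega)
      have h2 : (j-1).toNat % n = (j-1).toNat := Nat.mod_eq_of_lt (by omega)
      simp only [Fin.mk_lt_mk, h1, h2]
      omega
    exact_mod_cast (e.lt_iff_lt.2 hlt)
  have hval_inj : ∀ i j : ℤ, 1 ≤ i → i ≤ n → 1 ≤ j → j ≤ n → val i = val j → i = j := by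
    intro i j hi hi' hj hj' hij
    by_contra hne
    rcases lt_or_gt_of_ne hne with h | h
    · have := hval_mono i j hi h hj'
      rw [hij] at this
      omega
    · have := hval_mono j i hj h hi'
      rw [hij] at this
      omega
  -- the window function
  set F : ℤ → ℤ := fun x => if 1 ≤ x ∧ x ≤ (n:ℤ) then val x
    else if 1 ≤ -x ∧ -x ≤ (n:ℤ) then -(val (-x)) else x with hF
  set D : Set ℤ := Set.Icc (-(n:ℤ)) n with hD
  have hFD : Set.MapsTo F D D := by
    intro x hx
    simp only [hD, Set.mem_Icc] at hx ⊢
    simp only [hF]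
    split_ifs with h1 h2
    · have := hVbound _ (hval_mem x).1
      rcases abs_cases (val x) with ⟨e1,_⟩|⟨e1,_⟩ <;> omega
    · have := hVbound _ (hval_mem (-x)).1
      rcases abs_cases (val (-x)) with ⟨e1,_⟩|⟨e1,_⟩ <;> omega
    · omega
  have hFinj : Set.InjOn F D := by
    intro x hx y hy hxy
    simp only [hD, Set.mem_Icc] at hx hy
    simp only [hF] at hxy
    have hVnz : ∀ v ∈ V, v ≠ 0 := by
      intro v hv
      have := hVbound v hv
      rcases abs_cases v with ⟨e1,_⟩|⟨e1,_⟩ <;> omega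
    split_ifs at hxy
    · obtain ⟨a1,a2⟩ : 1 ≤ x ∧ x ≤ (n:ℤ) := by assumption
      obtain ⟨b1,b2⟩ : 1 ≤ y ∧ y ≤ (n:ℤ) := by assumption
      exact hval_inj x y a1 a2 b1 b2 hxy
    · exfalso
      have hx1 := (hval_mem x).1
      have hy1 := (hval_mem (-y)).1
      have : -(val x) = val (-y) := by omega
      exact hVnotneg _ hx1 (this ▸ hy1)
    · exfalso
      have := hVnz _ (hval_mem x).1
      omega
    · exfalso
      have hx1 := (hval_mem (-x)).1
      have hy1 := (hval_mem y).1
      have : -(val (-x)) = val y := hxy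
      have h6 : val (-x) = -(val y) := by omega
      exact hVnotneg _ hy1 (h6 ▸ hx1)
    · obtain ⟨a1,a2⟩ : 1 ≤ -x ∧ -x ≤ (n:ℤ) := by assumption
      obtain ⟨b1,b2⟩ : 1 ≤ -y ∧ -y ≤ (n:ℤ) := by assumption
      have := hval_inj (-x) (-y) a1 a2 b1 b2 (by omega)
      omega
    · exfalso
      have := hVnz _ (hval_mem (-x)).1
      omega
    · exfalso
      have := hVnz _ (hval_mem y).1
      omega
    · exfalso
      have := hVnz _ (hval_mem (-y)).1
      omega
    · exact hxy
  have hDfin : D.Finite := Set.finite_Icc _ _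
  have hFbij : Set.BijOn F D D := (hDfin.injOn_iff_bijOn_of_mapsTo hFD).1 hFinj
  haveI : DecidablePred (· ∈ D) := fun x => Classical.propDecidable _
  set u : Equiv.Perm ℤ := Equiv.Perm.ofSubtype (hFbij.equiv F) with hu
  have huF : ∀ x : ℤ, x ∈ D → u x = F x := by
    intro x hx
    rw [hu, Equiv.Perm.ofSubtype_apply_of_mem _ hx]
    rfl
  have huId : ∀ x : ℤ, x ∉ D → u x = x := by
    intro x hx
    rw [hu, Equiv.Perm.ofSubtype_apply_of_not_mem _ hx]
  have hodd : ∀ x : ℤ, u (-x) = -(u x) := by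
    intro x
    by_cases hx : x ∈ D
    · have hnx : -x ∈ D := by
        simp only [hD, Set.mem_Icc] at hx ⊢
        omega
      rw [huF _ hx, huF _ hnx]
      simp only [hF, neg_neg]
      split_ifs <;> omega
    · have hnx : -x ∉ D := by
        simp only [hD, Set.mem_Icc] at hx ⊢
        omega
      rw [huId _ hx, huId _ hnx]
  have hsupp : ∀ x : ℤ, (n:ℤ) < |x| → u x = x := by
    intro x hx
    apply huId
    simp only [hD, Set.mem_Icc]
    rcases abs_cases x with ⟨e,_⟩|⟨e,_⟩ <;> omega
  have hwin : ∀ i : ℤ, 1 ≤ i → i ≤ (n:ℤ) → u i = val i := by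
    intro i h1 h2
    rw [huF i (by simp only [hD, Set.mem_Icc]; omega)]
    simp only [hF]
    rw [if_pos ⟨h1, h2⟩]
  have hsp : isSP n u := ⟨hodd, hsupp⟩
  refine ⟨u, hsp, ?_, ?_⟩
  · intro i j h1 h2 h3
    rw [hwin i h1 (by omega), hwin j (by omega) h3]
    exact hval_mono i j h1 h2 h3
  · -- negative value set is Tz
    have himag : (Finset.Icc (1:ℤ) n).image val = V := by
      apply Finset.eq_of_subset_of_card_le
      · intro v hv
        obtain ⟨i, hi, rfl⟩ := Finset.mem_image.1 hv
        exact (hval_mem i).1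
      · rw [hVcard, Finset.card_image_of_injOn, hIccCard]
        intro i hi j hj hij
        simp only [Finset.coe_Icc, Set.mem_Icc] at hi hj
        exact hval_inj i j hi.1 hi.2 hj.1 hj.2 hij
    intro a ha1 ha2
    constructor
    · intro hlt
      by_contra hno
      have haV : a ∈ V := by
        rw [hV]
        apply Finset.mem_image.2
        exact ⟨a, Finset.mem_Icc.2 ⟨ha1, ha2⟩, by simp only [hsg]; rw [if_neg hno]⟩
      rw [← himag] at haV
      obtain ⟨i, hi, hvi⟩ := Finset.mem_image.1 haV
      simp only [Finset.mem_Icc] at hi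
      have hui : u i = a := by rw [hwin i hi.1 hi.2, hvi]
      have : u⁻¹ a = i := by rw [← hui, Equiv.Perm.inv_apply_self]
      omega
    · intro hmem
      have haV : -a ∈ V := by
        rw [hV]
        apply Finset.mem_image.2
        exact ⟨a, Finset.mem_Icc.2 ⟨ha1, ha2⟩, by simp only [hsg]; rw [if_pos hmem]⟩
      rw [← himag] at haV
      obtain ⟨i, hi, hvi⟩ := Finset.mem_image.1 haV
      simp only [Finset.mem_Icc] at hi
      have hui : u (-i) = a := by
        rw [hodd i, hwin i hi.1 hi.2, hvi, neg_neg]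
      have : u⁻¹ a = -i := by rw [← hui, Equiv.Perm.inv_apply_self]
      omega

/-! ### final assembly helpers -/

lemma left_kinc {n : ℕ} (hn : 1 ≤ n) {w : Equiv.Perm ℤ}
    (hcl : w ∈ Subgroup.closure (genC n))
    (hdes : ∀ i : ℕ, 1 ≤ i → i + 1 ≤ n →
      wordLen (genC n) w < wordLen (genC n) (sgnSwap i * w)) :
    ∀ i j : ℤ, 1 ≤ i → i < j → j ≤ (n:ℤ) → kap n (w⁻¹ i) < kap n (w⁻¹ j) := by
  apply kap_mono_of_adj
  apply adj_of_nat (isSP_inv (closure_isSP hcl))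
  intro i h1 h2
  exact (descent_iff_one hn hcl i h1 h2).1 (hdes i h1 h2)

lemma sum_neg {n : ℕ} {u : Equiv.Perm ℤ} (hu : isSP n u) :
    ∑ j ∈ (Finset.Icc (1:ℤ) n).filter (fun j => u j < 0), ((n:ℤ)+1+u j)
      = ∑ s ∈ (Finset.Icc 1 n).filter (fun s : ℕ => u⁻¹ ((n:ℤ)+1-(s:ℤ)) < 0), (s:ℤ) := by
  have huinv := isSP_inv hu
  apply Finset.sum_nbij' (i := fun j => ((n:ℤ)+1+u j).toNat)
    (j := fun s : ℕ => -(u⁻¹ ((n:ℤ)+1-(s:ℤ))))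
  · intro j hj
    simp only [Finset.mem_filter, Finset.mem_Icc] at hj ⊢
    obtain ⟨⟨hj1, hj2⟩, hj3⟩ := hj
    have hw := isSP_window hu (Finset.mem_Icc.2 ⟨hj1, hj2⟩)
    have hcast : (((( n:ℤ)+1+u j).toNat : ℤ)) = (n:ℤ)+1+u j :=
      Int.toNat_of_nonneg (by rcases abs_cases (u j) with ⟨e,_⟩|⟨e,_⟩ <;> omega)
    refine ⟨⟨?_, ?_⟩, ?_⟩
    · rcases abs_cases (u j) with ⟨e,_⟩|⟨e,_⟩ <;> omega
    · rcases abs_cases (u j) with ⟨e,_⟩|⟨e,_⟩ <;> omega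
    · have harg : (n:ℤ)+1-((((n:ℤ)+1+u j).toNat : ℤ)) = -(u j) := by
        rw [hcast]; ring
      rw [harg, huinv.1, Equiv.Perm.inv_apply_self]
      omega
  · intro s hs
    simp only [Finset.mem_filter, Finset.mem_Icc] at hs ⊢
    obtain ⟨⟨hs1, hs2⟩, hs3⟩ := hs
    have hsn : (s:ℤ) ≤ n := by exact_mod_cast hs2
    have hs1' : (1:ℤ) ≤ s := by exact_mod_cast hs1
    have hwa := isSP_window huinv (x := (n:ℤ)+1-(s:ℤ)) (Finset.mem_Icc.2 ⟨by omega, by omega⟩)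
    refine ⟨⟨?_, ?_⟩, ?_⟩
    · rcases abs_cases (u⁻¹ ((n:ℤ)+1-(s:ℤ))) with ⟨e,_⟩|⟨e,_⟩ <;> omega
    · rcases abs_cases (u⁻¹ ((n:ℤ)+1-(s:ℤ))) with ⟨e,_⟩|⟨e,_⟩ <;> omega
    · rw [hu.1, Equiv.Perm.apply_inv_self]
      omega
  · intro j hj
    simp only [Finset.mem_filter, Finset.mem_Icc] at hj
    obtain ⟨⟨hj1, hj2⟩, hj3⟩ := hj
    have hw := isSP_window hu (Finset.mem_Icc.2 ⟨hj1, hj2⟩)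
    have hcast : ((((n:ℤ)+1+u j).toNat : ℤ)) = (n:ℤ)+1+u j :=
      Int.toNat_of_nonneg (by rcases abs_cases (u j) with ⟨e,_⟩|⟨e,_⟩ <;> omega)
    have harg : (n:ℤ)+1-((((n:ℤ)+1+u j).toNat : ℤ)) = -(u j) := by
      rw [hcast]; ring
    rw [harg, huinv.1, Equiv.Perm.inv_apply_self]
    ring
  · intro s hs
    simp only [Finset.mem_filter, Finset.mem_Icc] at hs
    obtain ⟨⟨hs1, hs2⟩, hs3⟩ := hs
    have hval : u (-(u⁻¹ ((n:ℤ)+1-(s:ℤ)))) = -((n:ℤ)+1-(s:ℤ)) := by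
      rw [hu.1, Equiv.Perm.apply_inv_self]
    rw [hval]
    have hsn : (s:ℤ) ≤ n := by exact_mod_cast hs2
    have hs1' : (1:ℤ) ≤ s := by exact_mod_cast hs1
    omega
  · intro j hj
    simp only [Finset.mem_filter, Finset.mem_Icc] at hj
    obtain ⟨⟨hj1, hj2⟩, hj3⟩ := hj
    have hw := isSP_window hu (Finset.mem_Icc.2 ⟨hj1, hj2⟩)
    have hcast : ((((n:ℤ)+1+u j).toNat : ℤ)) = (n:ℤ)+1+u j :=
      Int.toNat_of_nonneg (by rcases abs_cases (u j) with ⟨e,_⟩|⟨e,_⟩ <;> omega)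
    rw [hcast]

lemma left_sum {n : ℕ} (hn : 1 ≤ n) {w : Equiv.Perm ℤ}
    (hcl : w ∈ Subgroup.closure (genC n))
    (hdes : ∀ i : ℕ, 1 ≤ i → i + 1 ≤ n →
      wordLen (genC n) w < wordLen (genC n) (sgnSwap i * w)) :
    ((wordLen (genC n) w : ℕ) : ℤ)
      = ∑ s ∈ (Finset.Icc 1 n).filter (fun s : ℕ => w ((n:ℤ)+1-(s:ℤ)) < 0), (s:ℤ) := by
  have hu := isSP_inv (closure_isSP hcl)
  have h1 : wordLen (genC n) w = wordLen (genC n) w⁻¹ := (wordLen_inv w).symm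
  rw [h1, wordLen_eq_LB hn hu, LB_kinc hu (left_kinc hn hcl hdes), sum_neg hu]
  simp only [inv_inv]

lemma window_image {n : ℕ} {u : Equiv.Perm ℤ} (hu : isSP n u) :
    (Finset.Icc (1:ℤ) n).image ⇑u
      = (Finset.Icc (1:ℤ) n).image (fun a => if u⁻¹ a < 0 then -a else a) := by
  have huinv := isSP_inv hu
  ext y
  simp only [Finset.mem_image, Finset.mem_Icc]
  constructor
  · rintro ⟨j, hj, rfl⟩
    have hw := isSP_window hu (Finset.mem_Icc.2 hj)
    rcases (isSP_ne_zero hu (show j ≠ 0 by omega)).lt_or_gt with hneg | hpos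
    · refine ⟨-(u j), by rcases abs_cases (u j) with ⟨e,_⟩|⟨e,_⟩ <;> omega, ?_⟩
      have h1 : u⁻¹ (-(u j)) = -j := by
        rw [huinv.1, Equiv.Perm.inv_apply_self]
      rw [if_pos (show u⁻¹ (-(u j)) < 0 by rw [h1]; omega), neg_neg]
    · refine ⟨u j, by rcases abs_cases (u j) with ⟨e,_⟩|⟨e,_⟩ <;> omega, ?_⟩
      rw [if_neg (by rw [Equiv.Perm.inv_apply_self]; omega)]
  · rintro ⟨a, ha, rfl⟩
    have hwa := isSP_window huinv (x := a) (Finset.mem_Icc.2 ha)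
    by_cases hc : u⁻¹ a < 0
    · rw [if_pos hc]
      refine ⟨-(u⁻¹ a), by rcases abs_cases (u⁻¹ a) with ⟨e,_⟩|⟨e,_⟩ <;> omega, ?_⟩
      rw [hu.1, Equiv.Perm.apply_inv_self]
    · rw [if_neg hc]
      refine ⟨u⁻¹ a, by rcases abs_cases (u⁻¹ a) with ⟨e,_⟩|⟨e,_⟩ <;> omega, ?_⟩
      exact Equiv.Perm.apply_inv_self u a

lemma left_ext {n : ℕ} (hn : 1 ≤ n) {w w' : Equiv.Perm ℤ}
    (hcl : w ∈ Subgroup.closure (genC n)) (hcl' : w' ∈ Subgroup.closure (genC n))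
    (hdes : ∀ i : ℕ, 1 ≤ i → i + 1 ≤ n →
      wordLen (genC n) w < wordLen (genC n) (sgnSwap i * w))
    (hdes' : ∀ i : ℕ, 1 ≤ i → i + 1 ≤ n →
      wordLen (genC n) w' < wordLen (genC n) (sgnSwap i * w'))
    (hfilt : ∀ a : ℤ, 1 ≤ a → a ≤ (n:ℤ) → (w a < 0 ↔ w' a < 0)) : w = w' := by
  have hu : isSP n w⁻¹ := isSP_inv (closure_isSP hcl)
  have hu' : isSP n w'⁻¹ := isSP_inv (closure_isSP hcl')
  have hk := left_kinc hn hcl hdes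
  have hk' := left_kinc hn hcl' hdes'
  -- images of the windows agree
  have himg : (Finset.Icc (1:ℤ) n).image ⇑(w⁻¹) = (Finset.Icc (1:ℤ) n).image ⇑(w'⁻¹) := by
    rw [window_image hu, window_image hu']
    apply Finset.image_congr
    intro a ha
    simp only [Finset.coe_Icc, Set.mem_Icc] at ha
    simp only [inv_inv]
    rcases hfilt a ha.1 ha.2 with hiff
    by_cases hc : w a < 0
    · rw [if_pos hc, if_pos (hiff.1 hc)]
    · rw [if_neg hc, if_neg (fun hcc => hc (hiff.2 hcc))]
  -- kappa-sorted images agree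
  have himgk : (Finset.Icc (1:ℤ) n).image (fun i => kap n (w⁻¹ i))
      = (Finset.Icc (1:ℤ) n).image (fun i => kap n (w'⁻¹ i)) := by
    have e1 : (Finset.Icc (1:ℤ) n).image (fun i => kap n (w⁻¹ i))
        = ((Finset.Icc (1:ℤ) n).image ⇑(w⁻¹)).image (kap n) := by
      rw [Finset.image_image]; rfl
    have e2 : (Finset.Icc (1:ℤ) n).image (fun i => kap n (w'⁻¹ i))
        = ((Finset.Icc (1:ℤ) n).image ⇑(w'⁻¹)).image (kap n) := by
      rw [Finset.image_image]; rfl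
    rw [e1, e2, himg]
  have hmono : StrictMonoOn (fun i => kap n (w⁻¹ i)) (Set.Icc (1:ℤ) (n:ℤ)) := by
    intro a ha b hb hab
    simp only [Set.mem_Icc] at ha hb
    exact hk a b ha.1 hab hb.2
  have hmono' : StrictMonoOn (fun i => kap n (w'⁻¹ i)) (Set.Icc (1:ℤ) (n:ℤ)) := by
    intro a ha b hb hab
    simp only [Set.mem_Icc] at ha hb
    exact hk' a b ha.1 hab hb.2
  have heq := sorted_unique n _ _ hmono hmono' himgk
  -- windows agree pointwise
  have hwin : ∀ i : ℤ, 1 ≤ i → i ≤ (n:ℤ) → w⁻¹ i = w'⁻¹ i := by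
    intro i h1 h2
    have hb := isSP_window hu (x := i) (Finset.mem_Icc.2 ⟨h1, h2⟩)
    have hb' := isSP_window hu' (x := i) (Finset.mem_Icc.2 ⟨h1, h2⟩)
    exact kap_inj hb.1 hb.2 hb'.1 hb'.2 (heq i (Finset.mem_Icc.2 ⟨h1, h2⟩))
  -- inverses agree everywhere
  have hext : w⁻¹ = w'⁻¹ := by
    ext x
    rcases le_or_gt x (-1) with hx | hx
    · rcases le_or_gt (-(n:ℤ)) x with hx2 | hx2
      · have h5 : w⁻¹ (-x) = w'⁻¹ (-x) := hwin (-x) (by omega) (by omega)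
        have o1 := hu.1 (-x)
        have o2 := hu'.1 (-x)
        simp only [neg_neg] at o1 o2
        omega
      · rw [hu.2 x (by rcases abs_cases x with ⟨e,_⟩|⟨e,_⟩ <;> omega),
          hu'.2 x (by rcases abs_cases x with ⟨e,_⟩|⟨e,_⟩ <;> omega)]
    · rcases le_or_gt x 0 with hx0 | hx0
      · have hx' : x = 0 := by omega
        rw [hx', isSP_zero hu, isSP_zero hu']
      · rcases le_or_gt x (n:ℤ) with hx2 | hx2
        · exact hwin x (by omega) hx2
        · rw [hu.2 x (by rcases abs_cases x with ⟨e,_⟩|⟨e,_⟩ <;> omega),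
            hu'.2 x (by rcases abs_cases x with ⟨e,_⟩|⟨e,_⟩ <;> omega)]
  have := congrArg Inv.inv hext
  simpa using this

lemma exists_left {n : ℕ} (hn : 1 ≤ n) (S : Finset ℕ) (hS : ∀ x ∈ S, 1 ≤ x ∧ x ≤ n) :
    ∃ w : Equiv.Perm ℤ, w ∈ Subgroup.closure (genC n) ∧
      (∀ i : ℕ, 1 ≤ i → i + 1 ≤ n →
        wordLen (genC n) w < wordLen (genC n) (sgnSwap i * w)) ∧
      (Finset.Icc 1 n).filter (fun s : ℕ => w ((n:ℤ)+1-(s:ℤ)) < 0) = S := by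
  classical
  set Tz : Finset ℤ := S.image (fun s : ℕ => (n:ℤ)+1-(s:ℤ)) with hTz
  have hT : ∀ a ∈ Tz, 1 ≤ a ∧ a ≤ (n:ℤ) := by
    intro a ha
    obtain ⟨s, hs, rfl⟩ := Finset.mem_image.1 ha
    have h1 := hS s hs
    have h2 : (1:ℤ) ≤ s := by exact_mod_cast h1.1
    have h3 : (s:ℤ) ≤ n := by exact_mod_cast h1.2
    omega
  obtain ⟨u, hsp, hkinc, hneg⟩ := exists_sorted n hn Tz hT
  have hclw : u⁻¹ ∈ Subgroup.closure (genC n) :=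
    inv_mem ((isSP_iff_closure hn).1 hsp)
  refine ⟨u⁻¹, hclw, ?_, ?_⟩
  · intro i h1 h2
    refine (descent_iff_one hn hclw i h1 h2).2 ?_
    simp only [inv_inv]
    have hc1 : 1 ≤ (i:ℤ) := by exact_mod_cast h1
    have hc2 : (i:ℤ)+1 ≤ n := by exact_mod_cast h2
    exact hkinc (i:ℤ) ((i:ℤ)+1) hc1 (by omega) hc2
  · ext s
    simp only [Finset.mem_filter, Finset.mem_Icc]
    constructor
    · rintro ⟨⟨hs1, hs2⟩, hs3⟩
      have h2 : (1:ℤ) ≤ s := by exact_mod_cast hs1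
      have h3 : (s:ℤ) ≤ n := by exact_mod_cast hs2
      have hmem := (hneg ((n:ℤ)+1-(s:ℤ)) (by omega) (by omega)).1 hs3
      obtain ⟨s', hs', he⟩ := Finset.mem_image.1 hmem
      have : (s':ℤ) = (s:ℤ) := by omega
      have : s' = s := by exact_mod_cast this
      exact this ▸ hs'
    · intro hsS
      have h1 := hS s hsS
      have h2 : (1:ℤ) ≤ s := by exact_mod_cast h1.1
      have h3 : (s:ℤ) ≤ n := by exact_mod_cast h1.2
      refine ⟨⟨h1.1, h1.2⟩, ?_⟩
      exact (hneg ((n:ℤ)+1-(s:ℤ)) (by omega) (by omega)).2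
        (Finset.mem_image_of_mem _ hsS)

/-- There is a bijection between the minimal coset representatives of `C_n/A_(n-1)`
of length `ℓ` (elements `w` of `C_n` with `ℓ(sw) > ℓ(w)` for every generator `s` of the
parabolic subgroup `A_(n-1) = ⟨s_1, …, s_(n-1)⟩`) and the strict partitions
`λ_1 > λ_2 > ⋯ > λ_m > 0` with `λ_1 ≤ n` and `Σ λ_i = ℓ` (recorded as finsets of
positive integers `≤ n` with sum `ℓ`). -/
theorem Cn_reps_biject_strict_partitions (n l : ℕ) (hn : 1 ≤ n) :
    Nonempty
      ({w : Equiv.Perm ℤ // w ∈ Subgroup.closure (genC n) ∧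
          (∀ i : ℕ, 1 ≤ i → i + 1 ≤ n →
            wordLen (genC n) w < wordLen (genC n) (sgnSwap i * w)) ∧
          wordLen (genC n) w = l} ≃
        {S : Finset ℕ // (∀ x ∈ S, 1 ≤ x ∧ x ≤ n) ∧ ∑ x ∈ S, x = l}) := by
  classical
  refine Nonempty.intro (Equiv.ofBijective
    (fun p => ⟨(Finset.Icc 1 n).filter (fun s : ℕ => p.1 ((n:ℤ)+1-(s:ℤ)) < 0),
      fun x hx => by
        have := Finset.mem_Icc.1 (Finset.mem_of_mem_filter x hx)
        exact this, by
        have h1 := left_sum hn p.2.1 p.2.2.1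
        rw [p.2.2.2] at h1
        have h2 : ∑ s ∈ (Finset.Icc 1 n).filter
            (fun s : ℕ => p.1 ((n:ℤ)+1-(s:ℤ)) < 0), (s:ℤ)
            = ((∑ s ∈ (Finset.Icc 1 n).filter
              (fun s : ℕ => p.1 ((n:ℤ)+1-(s:ℤ)) < 0), s : ℕ) : ℤ) := by
          push_cast
          rfl
        rw [h2] at h1
        exact_mod_cast h1.symm⟩) ⟨?_, ?_⟩)
  · -- injective
    intro p q h
    apply Subtype.ext
    have hfe := congrArg Subtype.val h
    simp only at hfe
    apply left_ext hn p.2.1 q.2.1 p.2.2.1 q.2.2.1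
    intro a h1 h2
    have hcast : ((((n:ℤ)+1-a).toNat : ℕ) : ℤ) = (n:ℤ)+1-a := by omega
    set s : ℕ := ((n:ℤ)+1-a).toNat with hsdef
    have hmemiff : s ∈ (Finset.Icc 1 n).filter (fun s : ℕ => p.1 ((n:ℤ)+1-(s:ℤ)) < 0)
        ↔ s ∈ (Finset.Icc 1 n).filter (fun s : ℕ => q.1 ((n:ℤ)+1-(s:ℤ)) < 0) := by
      rw [hfe]
    simp only [Finset.mem_filter, Finset.mem_Icc] at hmemiff
    have harg : (n:ℤ)+1-(s:ℤ) = a := by omega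
    rw [harg] at hmemiff
    have hsb : 1 ≤ s ∧ s ≤ n := by omega
    constructor
    · intro hc
      exact (hmemiff.1 ⟨hsb, hc⟩).2
    · intro hc
      exact (hmemiff.2 ⟨hsb, hc⟩).2
  · -- surjective
    rintro ⟨S, hS, hsum⟩
    obtain ⟨w, hcl, hdes, hfilt⟩ := exists_left hn S hS
    have hlen : wordLen (genC n) w = l := by
      have h1 := left_sum hn hcl hdes
      rw [hfilt] at h1
      have h2 : ∑ s ∈ S, (s:ℤ) = ((∑ s ∈ S, s : ℕ) : ℤ) := by
        push_cast
        rfl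
      rw [h2, hsum] at h1
      exact_mod_cast h1
    exact ⟨⟨w, hcl, hdes, hlen⟩, Subtype.ext hfilt⟩
end

section
/- For the symmetric group S_{n+1} with J = S \ {s_p}, an element u of the quotient poset W^J is covered by su (for simple reflection s) in Bruhat order if and only if an s-labeled box can be appended to the diagram of u to form a new valid subdiagram; equivalently, covers in Bruhat order on W^J correspond exactly to adding a single box in Young's lattice restricted to the p × (n+1-p) rectangle. -/
open Equiv Finset

/-- The number of inversions of a permutation of `Fin m`; this is its Coxeter length
in the symmetric group `A_(m-1)`. -/
def invNum {m : ℕ} (w : Equiv.Perm (Fin m)) : ℕ :=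
  ((Finset.univ : Finset (Fin m × Fin m)).filter
    (fun p => p.1 < p.2 ∧ w p.2 < w p.1)).card

/-- The strong Bruhat order on the symmetric group: the reflexive-transitive closure
of the relation "multiply by a reflection (a transposition) and increase the length". -/
def bruhatLE {m : ℕ} (u v : Equiv.Perm (Fin m)) : Prop :=
  Relation.ReflTransGen
    (fun x y => invNum x < invNum y ∧ ∃ a b : Fin m, a ≠ b ∧ y = x * Equiv.swap a b)
    u v

def invSet {m : ℕ} (w : Equiv.Perm (Fin m)) : Finset (Fin m × Fin m) :=
  (Finset.univ : Finset (Fin m × Fin m)).filter (fun p => p.1 < p.2 ∧ w p.2 < w p.1)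

lemma mem_invSet {m : ℕ} (w : Equiv.Perm (Fin m)) (q : Fin m × Fin m) :
    q ∈ invSet w ↔ q.1 < q.2 ∧ w q.2 < w q.1 := by
  simp [invSet]

lemma invNum_lt_swap {m : ℕ} (z : Equiv.Perm (Fin m)) (a b : Fin m)
    (hab : a < b) (hz : z a < z b) : invNum z < invNum (z * Equiv.swap a b) := by
  classical
  set y := z * Equiv.swap a b with hy
  have hyv : ∀ i, y i = z (Equiv.swap a b i) := fun i => rfl
  have hya : y a = z b := by simp [hyv]
  have hyb : y b = z a := by simp [hyv]
  have hyo : ∀ i, i ≠ a → i ≠ b → y i = z i := by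
    intro i h1 h2; simp [hyv, Equiv.swap_apply_of_ne_of_ne h1 h2]
  set φ : Fin m × Fin m → Fin m × Fin m :=
    fun q => if q.2 = a ∧ ¬ (z b < z q.1) then (q.1, b)
      else if q.1 = b ∧ ¬ (z q.2 < z a) then (a, q.2) else q with hφ
  set ψ : Fin m × Fin m → Fin m × Fin m :=
    fun q => if q.2 = b ∧ ¬ (z b < z q.1) then (q.1, a)
      else if q.1 = a ∧ ¬ (z q.2 < z a) then (b, q.2) else q with hψ
  have himg : ∀ q ∈ invSet z, φ q ∈ invSet y := by
    rintro ⟨i, j⟩ hq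
    rw [mem_invSet] at hq
    obtain ⟨hij, hzji⟩ := hq
    simp only at hij hzji
    rw [mem_invSet]
    by_cases h1 : j = a ∧ ¬ (z b < z i)
    · have : φ (i, j) = (i, b) := if_pos h1
      rw [this]
      have hia : i ≠ a := h1.1 ▸ ne_of_lt hij
      have hib : i ≠ b := ne_of_lt (lt_trans (h1.1 ▸ hij) hab)
      refine ⟨lt_trans (h1.1 ▸ hij) hab, ?_⟩
      rw [hyb, hyo i hia hib]
      rw [h1.1] at hzji; exact hzji
    · by_cases h2 : i = b ∧ ¬ (z j < z a)
      · have : φ (i, j) = (a, j) := by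
          simp only [hφ]; rw [if_neg h1, if_pos h2]
        rw [this]
        have hbj : b < j := h2.1 ▸ hij
        have hja : j ≠ a := ne_of_gt (lt_trans hab hbj)
        have hjb : j ≠ b := ne_of_gt hbj
        refine ⟨lt_trans hab hbj, ?_⟩
        rw [hya, hyo j hja hjb]
        rw [h2.1] at hzji; exact hzji
      · have hid : φ (i, j) = (i, j) := by
          simp only [hφ]; rw [if_neg h1, if_neg h2]
        rw [hid]
        refine ⟨hij, ?_⟩
        by_cases hja : j = a
        · have hbi : z b < z i := by
            by_contra hc; exact h1 ⟨hja, hc⟩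
          have hia : i ≠ a := hja ▸ ne_of_lt hij
          have hib : i ≠ b := ne_of_lt (lt_trans (hja ▸ hij) hab)
          rw [hja, hya, hyo i hia hib]; exact hbi
        · by_cases hib : i = b
          · have hjza : z j < z a := by
              by_contra hc; exact h2 ⟨hib, hc⟩
            have hjb : j ≠ b := ne_of_gt (hib ▸ hij)
            rw [hib, hyb, hyo j hja hjb]; exact hjza
          · by_cases hia : i = a
            · have hjb : j ≠ b := by
                intro hjb; rw [hia, hjb] at hzji; exact absurd hzji (lt_asymm hz)
              rw [hia, hya, hyo j hja hjb]
              exact lt_trans (hia ▸ hzji) hz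
            · by_cases hjb : j = b
              · rw [hjb, hyb, hyo i hia hib]
                exact lt_trans hz (hjb ▸ hzji)
              · rw [hyo i hia hib, hyo j hja hjb]; exact hzji
  have hlinv : ∀ q ∈ invSet z, ψ (φ q) = q := by
    rintro ⟨i, j⟩ hq
    rw [mem_invSet] at hq
    obtain ⟨hij, hzji⟩ := hq
    simp only at hij hzji
    by_cases h1 : j = a ∧ ¬ (z b < z i)
    · have h1' : φ (i, j) = (i, b) := if_pos h1
      rw [h1']
      have : ψ (i, b) = (i, a) := by simp [hψ, h1.2]
      rw [this, h1.1]
    · by_cases h2 : i = b ∧ ¬ (z j < z a)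
      · have h2' : φ (i, j) = (a, j) := by
          simp only [hφ]; rw [if_neg h1, if_pos h2]
        rw [h2']
        have hjb : j ≠ b := ne_of_gt (h2.1 ▸ hij)
        have c1 : ¬ (j = b ∧ ¬ (z b < z a)) := fun hc => hjb hc.1
        have : ψ (a, j) = (b, j) := by simp [hψ, hjb, h2.2]
        rw [this, h2.1]
      · have hid : φ (i, j) = (i, j) := by
          simp only [hφ]; rw [if_neg h1, if_neg h2]
        rw [hid]
        have c1 : ¬ (j = b ∧ ¬ (z b < z i)) := by
          rintro ⟨hjb, hc⟩; exact hc (hjb ▸ hzji)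
        have c2 : ¬ (i = a ∧ ¬ (z j < z a)) := by
          rintro ⟨hia, hc⟩; exact hc (hia ▸ hzji)
        simp only [hψ]; rw [if_neg c1, if_neg c2]
  have hinj : Set.InjOn φ (invSet z) := by
    intro q hq q' hq' h
    have := hlinv q (Finset.mem_coe.mp hq)
    rw [← this, h, hlinv q' (Finset.mem_coe.mp hq')]
  have hab_mem : (a, b) ∈ invSet y := by
    rw [mem_invSet]; exact ⟨hab, by rw [hya, hyb]; exact hz⟩
  have hab_nimg : (a, b) ∉ (invSet z).image φ := by
    rw [Finset.mem_image]
    rintro ⟨⟨i, j⟩, hq, heq⟩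
    rw [mem_invSet] at hq
    obtain ⟨hij, hzji⟩ := hq
    simp only at hij hzji
    by_cases h1 : j = a ∧ ¬ (z b < z i)
    · have : φ (i, j) = (i, b) := if_pos h1
      rw [this] at heq
      injection heq with e1 e2
      rw [e1, h1.1] at hij; exact lt_irrefl a hij
    · by_cases h2 : i = b ∧ ¬ (z j < z a)
      · have : φ (i, j) = (a, j) := by
          simp only [hφ]; rw [if_neg h1, if_pos h2]
        rw [this] at heq
        injection heq with e1 e2
        rw [h2.1, e2] at hij; exact lt_irrefl b hij
      · have : φ (i, j) = (i, j) := by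
          simp only [hφ]; rw [if_neg h1, if_neg h2]
        rw [this] at heq
        injection heq with e1 e2
        rw [e1, e2] at hzji
        exact absurd hzji (lt_asymm hz)
  have hsub : (invSet z).image φ ⊆ invSet y := by
    intro q hq
    rw [Finset.mem_image] at hq
    obtain ⟨r, hr, hrq⟩ := hq
    exact hrq ▸ himg r hr
  calc invNum z = ((invSet z).image φ).card := (Finset.card_image_of_injOn hinj).symm
    _ < (invSet y).card := Finset.card_lt_card
        ((Finset.ssubset_iff_of_subset hsub).mpr ⟨(a, b), hab_mem, hab_nimg⟩)
    _ = invNum y := rfl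

/-- Count, among the first `p` positions, of values `< t`. -/
def Ncount (p : ℕ) {m : ℕ} (w : Equiv.Perm (Fin m)) (t : ℕ) : ℕ :=
  ((Finset.univ : Finset (Fin m)).filter fun i : Fin m => (i : ℕ) < p ∧ (w i : ℕ) < t).card

lemma card_val_lt {m : ℕ} (t : ℕ) (ht : t ≤ m) :
    (((Finset.univ : Finset (Fin m))).filter fun k : Fin m => (k : ℕ) < t).card = t := by
  have key : ((Finset.univ : Finset (Fin m)).filter fun k : Fin m => (k : ℕ) < t).card
      = (Finset.range t).card := by
    apply Finset.card_bij (fun (a : Fin m) _ => (a : ℕ))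
    · intro a ha; simp only [Finset.mem_filter] at ha; simp [ha.2]
    · intro a _ b _ h; exact Fin.ext h
    · intro b hb
      simp only [Finset.mem_range] at hb
      exact ⟨⟨b, lt_of_lt_of_le hb ht⟩, by simp [hb], rfl⟩
  rw [key, Finset.card_range]

lemma card_perm_val_lt {m : ℕ} (w : Equiv.Perm (Fin m)) (t : ℕ) (ht : t ≤ m) :
    (((Finset.univ : Finset (Fin m))).filter fun k : Fin m => ((w k : ℕ)) < t).card = t := by
  have key : ((Finset.univ : Finset (Fin m)).filter fun k : Fin m => ((w k : ℕ)) < t).card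
      = ((Finset.univ : Finset (Fin m)).filter fun k : Fin m => (k : ℕ) < t).card := by
    apply Finset.card_bij (fun a _ => w a)
    · intro a ha; simp only [Finset.mem_filter] at ha ⊢; exact ⟨Finset.mem_univ _, ha.2⟩
    · intro a _ b _ h; exact w.injective h
    · intro b hb
      simp only [Finset.mem_filter] at hb
      refine ⟨w.symm b, Finset.mem_filter.mpr ⟨Finset.mem_univ _, ?_⟩, w.apply_symm_apply b⟩
      rw [w.apply_symm_apply]; exact hb.2
  rw [key, card_val_lt t ht]

lemma Ncount_add_M {m p : ℕ} (w : Equiv.Perm (Fin m)) (t : ℕ) (ht : t ≤ m) :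
    Ncount p w t +
      (((Finset.univ : Finset (Fin m))).filter fun k : Fin m => p ≤ (k : ℕ) ∧ (w k : ℕ) < t).card
      = t := by
  have h := Finset.card_filter_add_card_filter_not (s := (Finset.univ : Finset (Fin m)).filter fun k : Fin m => ((w k : ℕ)) < t) (p := fun k : Fin m => (k : ℕ) < p)
  rw [Finset.filter_filter, Finset.filter_filter, card_perm_val_lt w t ht] at h
  have e1 : ((Finset.univ : Finset (Fin m)).filter fun k : Fin m => ((w k : ℕ)) < t ∧ (k : ℕ) < p)
      = ((Finset.univ : Finset (Fin m)).filter fun i : Fin m => (i : ℕ) < p ∧ ((w i : ℕ)) < t) := by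
    apply Finset.filter_congr; intro k _; exact and_comm
  have e2 : ((Finset.univ : Finset (Fin m)).filter fun k : Fin m => ((w k : ℕ)) < t ∧ ¬ (k : ℕ) < p)
      = ((Finset.univ : Finset (Fin m)).filter fun k : Fin m => p ≤ (k : ℕ) ∧ ((w k : ℕ)) < t) := by
    apply Finset.filter_congr; intro k _
    constructor
    · rintro ⟨h1, h2⟩; exact ⟨Nat.le_of_not_lt h2, h1⟩
    · rintro ⟨h1, h2⟩; exact ⟨h2, Nat.not_lt_of_le h1⟩
  rw [e1, e2] at h
  exact h

lemma Ncount_step_le_aux {m p : ℕ} (x : Equiv.Perm (Fin m)) (a b : Fin m)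
    (hab : a < b) (hlt : invNum x < invNum (x * Equiv.swap a b)) (t : ℕ) :
    Ncount p (x * Equiv.swap a b) t ≤ Ncount p x t := by
  classical
  have hne : a ≠ b := ne_of_lt hab
  have hx : x a < x b := by
    rcases lt_trichotomy (x a) (x b) with h | h | h
    · exact h
    · exact absurd (x.injective h) hne
    · exfalso
      have h2 : invNum (x * Equiv.swap a b) < invNum ((x * Equiv.swap a b) * Equiv.swap a b) :=
        invNum_lt_swap _ a b hab (by
          simp only [Equiv.Perm.mul_apply, Equiv.swap_apply_left, Equiv.swap_apply_right]
          exact h)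
      rw [mul_assoc, Equiv.swap_mul_self, mul_one] at h2
      omega
  set y := x * Equiv.swap a b with hy
  have hyv : ∀ i, y i = x (Equiv.swap a b i) := fun i => rfl
  unfold Ncount
  by_cases hbp : (b : ℕ) < p
  · -- both in first block : equal cardinality
    apply le_of_eq
    apply Finset.card_bij' (fun i _ => Equiv.swap a b i) (fun i _ => Equiv.swap a b i)
    · intro i hi
      simp only [Finset.mem_filter] at hi ⊢
      refine ⟨Finset.mem_univ _, ?_, ?_⟩
      · rcases eq_or_ne i a with hia | hia
        · rw [hia, Equiv.swap_apply_left]; exact hbp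
        · rcases eq_or_ne i b with hib | hib
          · rw [hib, Equiv.swap_apply_right]
            calc (a : ℕ) < (b : ℕ) := hab
              _ < p := hbp
          · rw [Equiv.swap_apply_of_ne_of_ne hia hib]; exact hi.2.1
      · rw [← hyv]; exact hi.2.2
    · intro i hi
      simp only [Finset.mem_filter] at hi ⊢
      refine ⟨Finset.mem_univ _, ?_, ?_⟩
      · rcases eq_or_ne i a with hia | hia
        · rw [hia, Equiv.swap_apply_left]; exact hbp
        · rcases eq_or_ne i b with hib | hib
          · rw [hib, Equiv.swap_apply_right]
            calc (a : ℕ) < (b : ℕ) := hab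
              _ < p := hbp
          · rw [Equiv.swap_apply_of_ne_of_ne hia hib]; exact hi.2.1
      · rw [hyv, Equiv.swap_apply_self]; exact hi.2.2
    · intro i _; exact Equiv.swap_apply_self a b i
    · intro i _; exact Equiv.swap_apply_self a b i
  · by_cases hpa : p ≤ (a : ℕ)
    · -- both in second block : equal sets
      apply le_of_eq
      congr 1
      apply Finset.filter_congr
      intro i _
      constructor
      · rintro ⟨h1, h2⟩
        refine ⟨h1, ?_⟩
        rwa [hyv, Equiv.swap_apply_of_ne_of_ne
          (Fin.ne_of_val_ne (by omega)) (Fin.ne_of_val_ne (by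
            have : (a : ℕ) < (b : ℕ) := hab
            omega))] at h2
      · rintro ⟨h1, h2⟩
        refine ⟨h1, ?_⟩
        rwa [hyv, Equiv.swap_apply_of_ne_of_ne
          (Fin.ne_of_val_ne (by omega)) (Fin.ne_of_val_ne (by
            have : (a : ℕ) < (b : ℕ) := hab
            omega))]
    · -- a in first block, b in second : subset
      apply Finset.card_le_card
      intro i hi
      simp only [Finset.mem_filter] at hi ⊢
      obtain ⟨_, h1, h2⟩ := hi
      refine ⟨Finset.mem_univ _, h1, ?_⟩
      have hib : i ≠ b := Fin.ne_of_val_ne (by omega)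
      rcases eq_or_ne i a with hia | hia
      · rw [hyv, hia, Equiv.swap_apply_left] at h2
        rw [hia]
        have : (x a : ℕ) < (x b : ℕ) := hx
        omega
      · rwa [hyv, Equiv.swap_apply_of_ne_of_ne hia hib] at h2

lemma Ncount_step_le {m p : ℕ} (x y : Equiv.Perm (Fin m))
    (hstep : invNum x < invNum y ∧ ∃ a b : Fin m, a ≠ b ∧ y = x * Equiv.swap a b)
    (t : ℕ) : Ncount p y t ≤ Ncount p x t := by
  obtain ⟨hlt, a, b, hab, rfl⟩ := hstep
  rcases lt_or_gt_of_ne hab with h | h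
  · exact Ncount_step_le_aux x a b h hlt t
  · rw [Equiv.swap_comm] at hlt ⊢
    exact Ncount_step_le_aux x b a h hlt t

section Grass

variable {n p : ℕ}

/-- The Grassmannian condition. -/
def IsGrass (p : ℕ) {m : ℕ} (w : Equiv.Perm (Fin m)) : Prop :=
  (∀ i j : Fin m, i < j → (j : ℕ) < p → w i < w j) ∧
  (∀ i j : Fin m, p ≤ (i : ℕ) → i < j → w i < w j)

variable {w : Equiv.Perm (Fin (n + 1))}

lemma grass_lower (hw2 : ∀ i j : Fin (n + 1), p ≤ (i : ℕ) → i < j → w i < w j) :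
    ∀ jv (hlt : p + jv < n + 1), jv ≤ (w ⟨p + jv, hlt⟩ : ℕ) := by
  intro jv
  induction jv with
  | zero => intro _; exact Nat.zero_le _
  | succ jv ih =>
    intro hlt
    have hlt' : p + jv < n + 1 := by omega
    have h1 : w ⟨p + jv, hlt'⟩ < w ⟨p + jv + 1, by omega⟩ :=
      hw2 _ _ (by simp) (by rw [Fin.lt_def]; simp)
    have h2 := ih hlt'
    have h3 : (w ⟨p + jv, hlt'⟩ : ℕ) < (w ⟨p + jv + 1, by omega⟩ : ℕ) := h1
    have : (⟨p + (jv + 1), hlt⟩ : Fin (n + 1)) = ⟨p + jv + 1, by omega⟩ := by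
      apply Fin.ext; simp; omega
    rw [this]
    omega

lemma grass_upper (hp : 1 ≤ p)
    (hw2 : ∀ i j : Fin (n + 1), p ≤ (i : ℕ) → i < j → w i < w j) :
    ∀ jv (hlt : p + jv < n + 1), (w ⟨p + jv, hlt⟩ : ℕ) ≤ p + jv := by
  have key : ∀ d kv (hk : kv < n + 1), kv = n - d → p ≤ kv → (w ⟨kv, hk⟩ : ℕ) ≤ kv := by
    intro d
    induction d with
    | zero =>
      intro kv hk hkv _
      have hkn : kv = n := by omega
      have := (w ⟨kv, hk⟩).isLt
      omega
    | succ d ih =>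
      intro kv hk hkv hpk
      rcases Nat.lt_or_ge kv n with hlt | hge
      · have h1 : w ⟨kv, hk⟩ < w ⟨kv + 1, by omega⟩ :=
          hw2 _ _ hpk (by rw [Fin.lt_def]; simp)
        have h2 : (w ⟨kv + 1, by omega⟩ : ℕ) ≤ kv + 1 := by
          apply ih (kv + 1) (by omega) (by omega) (by omega)
        have h3 : (w ⟨kv, hk⟩ : ℕ) < (w ⟨kv + 1, by omega⟩ : ℕ) := h1
        omega
      · have := (w ⟨kv, hk⟩).isLt
        omega
  intro jv hlt
  exact key (n - (p + jv)) (p + jv) hlt (by omega) (by omega)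

lemma grass_block2_iff (hw2 : ∀ i j : Fin (n + 1), p ≤ (i : ℕ) → i < j → w i < w j)
    (k l : Fin (n + 1)) (hk : p ≤ (k : ℕ)) (hl : p ≤ (l : ℕ)) :
    ((w k : ℕ) < (w l : ℕ) ↔ (k : ℕ) < (l : ℕ)) := by
  constructor
  · intro h
    by_contra hc
    push_neg at hc
    rcases Nat.lt_or_ge (l : ℕ) (k : ℕ) with h1 | h1
    · have := hw2 l k hl (Fin.lt_def.mpr h1)
      rw [Fin.lt_def] at this; omega
    · have : l = k := Fin.ext (by omega)
      subst this; omega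
  · intro h
    exact Fin.lt_def.mp (hw2 k l hk (Fin.lt_def.mpr h))

lemma grass_M (hw2 : ∀ i j : Fin (n + 1), p ≤ (i : ℕ) → i < j → w i < w j)
    (jv : ℕ) (hlt : p + jv < n + 1) :
    (((Finset.univ : Finset (Fin (n + 1)))).filter
      fun k : Fin (n + 1) => p ≤ (k : ℕ) ∧ (w k : ℕ) < (w ⟨p + jv, hlt⟩ : ℕ)).card = jv := by
  have e1 : (((Finset.univ : Finset (Fin (n + 1)))).filter
      fun k : Fin (n + 1) => p ≤ (k : ℕ) ∧ (w k : ℕ) < (w ⟨p + jv, hlt⟩ : ℕ))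
      = (((Finset.univ : Finset (Fin (n + 1)))).filter
      fun k : Fin (n + 1) => p ≤ (k : ℕ) ∧ (k : ℕ) < p + jv) := by
    apply Finset.filter_congr
    intro k _
    constructor
    · rintro ⟨h1, h2⟩
      refine ⟨h1, ?_⟩
      have := (grass_block2_iff hw2 k ⟨p + jv, hlt⟩ h1 (by simp)).mp h2
      simpa using this
    · rintro ⟨h1, h2⟩
      refine ⟨h1, ?_⟩
      apply (grass_block2_iff hw2 k ⟨p + jv, hlt⟩ h1 (by simp)).mpr
      simpa using h2
  rw [e1]
  have e2 : (((Finset.univ : Finset (Fin (n + 1)))).filter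
      fun k : Fin (n + 1) => p ≤ (k : ℕ) ∧ (k : ℕ) < p + jv).card
      = (Finset.Ico p (p + jv)).card := by
    apply Finset.card_bij (fun (a : Fin (n + 1)) _ => (a : ℕ))
    · intro a ha
      simp only [Finset.mem_filter] at ha
      rw [Finset.mem_Ico]
      exact ⟨ha.2.1, ha.2.2⟩
    · intro a _ b _ h; exact Fin.ext h
    · intro b hb
      rw [Finset.mem_Ico] at hb
      exact ⟨⟨b, by omega⟩, Finset.mem_filter.mpr ⟨Finset.mem_univ _, hb.1, hb.2⟩, rfl⟩
  rw [e2, Nat.card_Ico]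
  omega

lemma grass_Ncount (hw2 : ∀ i j : Fin (n + 1), p ≤ (i : ℕ) → i < j → w i < w j)
    (jv : ℕ) (hlt : p + jv < n + 1) :
    Ncount p w ((w ⟨p + jv, hlt⟩ : ℕ)) = (w ⟨p + jv, hlt⟩ : ℕ) - jv := by
  have h1 := Ncount_add_M (p := p) w ((w ⟨p + jv, hlt⟩ : ℕ)) (by omega)
  rw [grass_M hw2 jv hlt] at h1
  omega

/-- The value of the partition (as a natural number). -/
def fvalN (n p : ℕ) (w : Equiv.Perm (Fin (n + 1))) (jv : ℕ) : ℕ :=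
  if h : p + jv < n + 1 then p + jv - (w ⟨p + jv, h⟩ : ℕ) else 0

lemma fvalN_le (hw2 : ∀ i j : Fin (n + 1), p ≤ (i : ℕ) → i < j → w i < w j)
    (jv : ℕ) : fvalN n p w jv ≤ p := by
  unfold fvalN
  split_ifs with h
  · have := grass_lower hw2 jv h
    omega
  · omega

lemma fvalN_eq_sub_Ncount
    (hw2 : ∀ i j : Fin (n + 1), p ≤ (i : ℕ) → i < j → w i < w j)
    (jv : ℕ) (hlt : p + jv < n + 1) :
    fvalN n p w jv = p - Ncount p w ((w ⟨p + jv, hlt⟩ : ℕ)) := by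
  rw [grass_Ncount hw2 jv hlt]
  unfold fvalN
  rw [dif_pos hlt]
  have h1 := grass_lower hw2 jv hlt
  have h2 := grass_Ncount hw2 jv hlt
  have h3 : Ncount p w ((w ⟨p + jv, hlt⟩ : ℕ)) ≤ p := by
    unfold Ncount
    calc ((Finset.univ : Finset (Fin (n+1))).filter
        fun i : Fin (n+1) => (i : ℕ) < p ∧ (w i : ℕ) < (w ⟨p + jv, hlt⟩ : ℕ)).card
        ≤ ((Finset.univ : Finset (Fin (n+1))).filter
        fun i : Fin (n+1) => (i : ℕ) < p).card := by
          apply Finset.card_le_card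
          intro i hi
          simp only [Finset.mem_filter] at hi ⊢
          exact ⟨hi.1, hi.2.1⟩
      _ = p := card_val_lt p (by omega)
  omega

lemma Ncount_mono_t {m q : ℕ} (w' : Equiv.Perm (Fin m)) {t t' : ℕ} (h : t ≤ t') :
    Ncount q w' t ≤ Ncount q w' t' := by
  apply Finset.card_le_card
  intro i hi
  simp only [Finset.mem_filter] at hi ⊢
  exact ⟨hi.1, hi.2.1, by omega⟩

end Grass

section Formula

variable {n p : ℕ}
variable {w : Equiv.Perm (Fin (n + 1))}

/-- number of inversions whose second coordinate is `k` -/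
def colInv {m : ℕ} (w : Equiv.Perm (Fin m)) (k : Fin m) : ℕ :=
  ((Finset.univ : Finset (Fin m)).filter fun i : Fin m => i < k ∧ w k < w i).card

lemma invNum_eq_sum_colInv {m : ℕ} (w : Equiv.Perm (Fin m)) :
    invNum w = ∑ k : Fin m, colInv w k := by
  unfold invNum colInv
  rw [Finset.card_filter]
  rw [Fintype.sum_prod_type]
  rw [Finset.sum_comm]
  congr 1
  funext k
  rw [Finset.card_filter]

lemma colInv_first (hw1 : ∀ i j : Fin (n + 1), i < j → (j : ℕ) < p → w i < w j)
    (k : Fin (n + 1)) (hk : (k : ℕ) < p) : colInv w k = 0 := by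
  unfold colInv
  rw [Finset.card_eq_zero, Finset.filter_eq_empty_iff]
  intro i _
  rintro ⟨h1, h2⟩
  exact absurd (hw1 i k h1 hk) (lt_asymm h2)

lemma colInv_second (hw1 : ∀ i j : Fin (n + 1), i < j → (j : ℕ) < p → w i < w j)
    (hw2 : ∀ i j : Fin (n + 1), p ≤ (i : ℕ) → i < j → w i < w j)
    (jv : ℕ) (hlt : p + jv < n + 1) :
    colInv w ⟨p + jv, hlt⟩ = fvalN n p w jv := by
  set k : Fin (n + 1) := ⟨p + jv, hlt⟩ with hk
  set t : ℕ := (w k : ℕ) with ht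
  have e1 : ((Finset.univ : Finset (Fin (n+1))).filter fun i : Fin (n+1) => i < k ∧ w k < w i)
      = ((Finset.univ : Finset (Fin (n+1))).filter
          fun i : Fin (n+1) => (i : ℕ) < p ∧ t < (w i : ℕ)) := by
    apply Finset.filter_congr
    intro i _
    constructor
    · rintro ⟨h1, h2⟩
      refine ⟨?_, Fin.lt_def.mp h2⟩
      by_contra hc
      push_neg at hc
      exact absurd (hw2 i k hc h1) (lt_asymm h2)
    · rintro ⟨h1, h2⟩
      exact ⟨Fin.lt_def.mpr (by simp [hk]; omega), Fin.lt_def.mpr h2⟩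
  have key := Finset.card_filter_add_card_filter_not
    (s := (Finset.univ : Finset (Fin (n+1))).filter fun i : Fin (n+1) => (i : ℕ) < p)
    (p := fun i : Fin (n+1) => (w i : ℕ) < t)
  rw [Finset.filter_filter, Finset.filter_filter, card_val_lt p (by omega)] at key
  have e2 : ((Finset.univ : Finset (Fin (n+1))).filter
      fun i : Fin (n+1) => (i : ℕ) < p ∧ (w i : ℕ) < t).card = Ncount p w t := rfl
  have e3 : ((Finset.univ : Finset (Fin (n+1))).filter
      fun i : Fin (n+1) => (i : ℕ) < p ∧ ¬ ((w i : ℕ) < t))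
      = ((Finset.univ : Finset (Fin (n+1))).filter
          fun i : Fin (n+1) => (i : ℕ) < p ∧ t < (w i : ℕ)) := by
    apply Finset.filter_congr
    intro i _
    constructor
    · rintro ⟨h1, h2⟩
      refine ⟨h1, ?_⟩
      rcases Nat.lt_or_ge t (w i : ℕ) with h | h
      · exact h
      · exfalso
        have : (w i : ℕ) = t := by omega
        have : w i = w k := Fin.ext this
        have : i = k := w.injective this
        rw [this] at h1
        have hkv : (k : ℕ) = p + jv := by simp [hk]
        omega
    · rintro ⟨h1, h2⟩
      exact ⟨h1, by omega⟩
  rw [e2, e3] at key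
  unfold colInv
  rw [e1]
  have := fvalN_eq_sub_Ncount hw2 jv hlt
  rw [← ht] at this
  omega

lemma invNum_eq_sum_fvalN (hpn : p ≤ n)
    (hw1 : ∀ i j : Fin (n + 1), i < j → (j : ℕ) < p → w i < w j)
    (hw2 : ∀ i j : Fin (n + 1), p ≤ (i : ℕ) → i < j → w i < w j) :
    invNum w = ∑ j : Fin (n + 1 - p), fvalN n p w (j : ℕ) := by
  rw [invNum_eq_sum_colInv]
  have step1 : ∑ k : Fin (n + 1), colInv w k
      = ∑ k ∈ (Finset.univ : Finset (Fin (n+1))).filter (fun k : Fin (n+1) => p ≤ (k : ℕ)),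
          colInv w k := by
    symm
    apply Finset.sum_subset (Finset.filter_subset _ _)
    intro k _ hk
    simp only [Finset.mem_filter, Finset.mem_univ, true_and, not_le] at hk
    exact colInv_first hw1 k hk
  rw [step1]
  refine Finset.sum_nbij'
    (fun k : Fin (n + 1) => (⟨(k : ℕ) - p, by have := k.isLt; omega⟩ : Fin (n + 1 - p)))
    (fun j : Fin (n + 1 - p) => (⟨p + (j : ℕ), by have := j.isLt; omega⟩ : Fin (n + 1)))
    ?_ ?_ ?_ ?_ ?_
  · intro a _; exact Finset.mem_univ _
  · intro a _
    simp only [Finset.mem_filter]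
    exact ⟨Finset.mem_univ _, by simp⟩
  · intro a ha
    simp only [Finset.mem_filter, Finset.mem_univ, true_and] at ha
    apply Fin.ext; simp; omega
  · intro a _
    apply Fin.ext; simp
  · intro a ha
    simp only [Finset.mem_filter, Finset.mem_univ, true_and] at ha
    have e : a = ⟨p + ((a : ℕ) - p), by have := a.isLt; omega⟩ := by
      apply Fin.ext; simp; omega
    rw [e]
    rw [colInv_second hw1 hw2 ((a : ℕ) - p) (by have := a.isLt; omega)]
    congr 1
    simp

end Formula

section Bijection

variable {n p : ℕ}

/-- `fmapGr` : the partition associated to a Grassmannian permutation. -/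
def fmapGr (n p : ℕ) (W : {w : Equiv.Perm (Fin (n + 1)) // IsGrass p w}) :
    Fin (n + 1 - p) → Fin (p + 1) :=
  fun j => ⟨fvalN n p W.1 (j : ℕ), Nat.lt_succ_of_le (fvalN_le W.2.2 (j : ℕ))⟩

lemma fmapGr_antitone (W : {w : Equiv.Perm (Fin (n + 1)) // IsGrass p w}) :
    Antitone (fmapGr n p W) := by
  intro j j' hjj
  obtain ⟨w, hw1, hw2⟩ := W
  simp only [fmapGr]
  rw [Fin.mk_le_mk]
  have hj : p + (j : ℕ) < n + 1 := by have := j.isLt; omega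
  have hj' : p + (j' : ℕ) < n + 1 := by have := j'.isLt; omega
  rw [fvalN_eq_sub_Ncount hw2 (j : ℕ) hj, fvalN_eq_sub_Ncount hw2 (j' : ℕ) hj']
  have hvv : (w ⟨p + (j : ℕ), hj⟩ : ℕ) ≤ (w ⟨p + (j' : ℕ), hj'⟩ : ℕ) := by
    rcases Nat.lt_or_ge (j : ℕ) (j' : ℕ) with h | h
    · exact le_of_lt (Fin.lt_def.mp (hw2 _ _ (by simp) (Fin.lt_def.mpr (by simp; omega))))
    · have : (j : ℕ) = (j' : ℕ) := by
        have : (j : ℕ) ≤ (j' : ℕ) := hjj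
        omega
      simp [this]
  have := Ncount_mono_t (q := p) w hvv
  omega

lemma fmapGr_injective (hp : 1 ≤ p) (hpn : p ≤ n) :
    Function.Injective (fmapGr n p) := by
  rintro U V h
  have hval : ∀ jv (h' : jv < n + 1 - p), fvalN n p U.1 jv = fvalN n p V.1 jv := by
    intro jv h'
    have := congrFun h ⟨jv, h'⟩
    simpa [fmapGr, Fin.ext_iff] using this
  have hsecond : ∀ k : Fin (n + 1), p ≤ (k : ℕ) → U.1 k = V.1 k := by
    intro k hk
    have hkl := k.isLt
    have hjv : (k : ℕ) - p < n + 1 - p := by omega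
    have hlt : p + ((k : ℕ) - p) < n + 1 := by omega
    have hU := hval ((k : ℕ) - p) hjv
    have e : (⟨p + ((k : ℕ) - p), hlt⟩ : Fin (n + 1)) = k := Fin.ext (by simp; omega)
    have h1 : fvalN n p U.1 ((k : ℕ) - p) = p + ((k : ℕ) - p) - (U.1 k : ℕ) := by
      unfold fvalN; rw [dif_pos hlt, e]
    have h2 : fvalN n p V.1 ((k : ℕ) - p) = p + ((k : ℕ) - p) - (V.1 k : ℕ) := by
      unfold fvalN; rw [dif_pos hlt, e]
    have hU1 := grass_lower U.2.2 ((k : ℕ) - p) hlt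
    have hU2 := grass_upper hp U.2.2 ((k : ℕ) - p) hlt
    have hV1 := grass_lower V.2.2 ((k : ℕ) - p) hlt
    have hV2 := grass_upper hp V.2.2 ((k : ℕ) - p) hlt
    rw [e] at hU1 hU2 hV1 hV2
    apply Fin.ext
    omega
  -- second-block images agree, so first-block image sets agree
  set B : Finset (Fin (n + 1)) :=
    ((Finset.univ : Finset (Fin (n + 1))).filter fun k : Fin (n + 1) => p ≤ (k : ℕ)).image U.1
    with hB
  clear_value B
  have hBV : B = ((Finset.univ : Finset (Fin (n + 1))).filter
      fun k : Fin (n + 1) => p ≤ (k : ℕ)).image V.1 := by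
    rw [hB]
    apply Finset.image_congr
    intro k hk
    simp only [Finset.mem_coe, Finset.mem_filter] at hk
    exact hsecond k hk.2
  have hfiltcard : ((Finset.univ : Finset (Fin (n + 1))).filter
      fun k : Fin (n + 1) => p ≤ (k : ℕ)).card = n + 1 - p := by
    have key := Finset.card_filter_add_card_filter_not
      (s := (Finset.univ : Finset (Fin (n + 1)))) (p := fun k : Fin (n + 1) => (k : ℕ) < p)
    rw [card_val_lt p (by omega)] at key
    have e : ((Finset.univ : Finset (Fin (n + 1))).filter
        fun k : Fin (n + 1) => ¬ ((k : ℕ) < p))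
        = ((Finset.univ : Finset (Fin (n + 1))).filter fun k : Fin (n + 1) => p ≤ (k : ℕ)) := by
      apply Finset.filter_congr; intro k _; simp [Nat.not_lt]
    rw [e] at key
    simp only [Finset.card_univ, Fintype.card_fin] at key
    omega
  have hBcard : B.card = n + 1 - p := by
    rw [hB, Finset.card_image_of_injective _ U.1.injective, hfiltcard]
  have hAcard : Bᶜ.card = p := by
    rw [Finset.card_compl, hBcard]
    simp only [Fintype.card_fin]
    omega
  have hmemA : ∀ (W : {w : Equiv.Perm (Fin (n + 1)) // IsGrass p w}),
      B = ((Finset.univ : Finset (Fin (n + 1))).filter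
        fun k : Fin (n + 1) => p ≤ (k : ℕ)).image W.1 →
      ∀ i : Fin p, W.1 ⟨(i : ℕ), by have := i.isLt; omega⟩ ∈ Bᶜ := by
    intro W hWB i
    rw [Finset.mem_compl]
    intro hmem
    simp only [hWB, Finset.mem_image] at hmem
    obtain ⟨k, hk, hkeq⟩ := hmem
    simp only [Finset.mem_filter] at hk
    have := W.1.injective hkeq
    have hiv : (i : ℕ) < p := i.isLt
    rw [this] at hk
    simp at hk
    omega
  have hmonoW : ∀ (W : {w : Equiv.Perm (Fin (n + 1)) // IsGrass p w}),
      StrictMono (fun i : Fin p => W.1 ⟨(i : ℕ), by have := i.isLt; omega⟩) := by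
    intro W i j hij
    exact W.2.1 _ _ (Fin.lt_def.mpr (by simpa using Fin.lt_def.mp hij)) (by simpa using j.isLt)
  have hfirst : ∀ i : Fin p,
      U.1 ⟨(i : ℕ), by have := i.isLt; omega⟩ = V.1 ⟨(i : ℕ), by have := i.isLt; omega⟩ := by
    have hu := Finset.orderEmbOfFin_unique hAcard (hmemA U hB) (hmonoW U)
    have hv := Finset.orderEmbOfFin_unique hAcard (hmemA V hBV) (hmonoW V)
    intro i
    rw [congrFun hu i, congrFun hv i]
  apply Subtype.ext
  apply Equiv.ext
  intro k
  rcases Nat.lt_or_ge (k : ℕ) p with hk | hk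
  · have := hfirst ⟨(k : ℕ), hk⟩
    simpa using this
  · exact hsecond k hk

end Bijection

section Surj

variable {n p : ℕ}

/-- second-block values determined by a partition -/
def gvF (n p : ℕ) (F : Fin (n + 1 - p) → Fin (p + 1)) (jv : ℕ) : ℕ :=
  if h : jv < n + 1 - p then p + jv - (F ⟨jv, h⟩ : ℕ) else 0

lemma gvF_lt (hpn : p ≤ n) (F : Fin (n + 1 - p) → Fin (p + 1)) (jv : ℕ) :
    gvF n p F jv < n + 1 := by
  unfold gvF
  split_ifs with h
  · omega
  · omega

lemma gvF_mono (F : Fin (n + 1 - p) → Fin (p + 1)) (hF : Antitone F)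
    {jv jv' : ℕ} (h : jv < jv') (h' : jv' < n + 1 - p) :
    gvF n p F jv < gvF n p F jv' := by
  have hj : jv < n + 1 - p := by omega
  unfold gvF
  rw [dif_pos hj, dif_pos h']
  have hle : F ⟨jv', h'⟩ ≤ F ⟨jv, hj⟩ := hF (by rw [Fin.mk_le_mk]; omega)
  have h1 : (F ⟨jv', h'⟩ : ℕ) ≤ (F ⟨jv, hj⟩ : ℕ) := hle
  have h2 : (F ⟨jv, hj⟩ : ℕ) ≤ p := Nat.lt_succ_iff.mp (F ⟨jv, hj⟩).isLt
  omega

lemma exists_grass_of_antitone (hp : 1 ≤ p) (hpn : p ≤ n)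
    (F : Fin (n + 1 - p) → Fin (p + 1)) (hF : Antitone F) :
    ∃ w : Equiv.Perm (Fin (n + 1)), IsGrass p w ∧
      ∀ jv (h : jv < n + 1 - p), fvalN n p w jv = (F ⟨jv, h⟩ : ℕ) := by
  classical
  set Bf : Fin (n + 1 - p) → Fin (n + 1) :=
    fun j => ⟨gvF n p F (j : ℕ), gvF_lt hpn F _⟩ with hBf
  have hBf_inj : Function.Injective Bf := by
    intro j j' hjj
    rcases Nat.lt_trichotomy (j : ℕ) (j' : ℕ) with h | h | h
    · exfalso
      have := gvF_mono F hF h j'.isLt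
      rw [Fin.ext_iff] at hjj
      simp only [hBf] at hjj
      omega
    · exact Fin.ext h
    · exfalso
      have := gvF_mono F hF h j.isLt
      rw [Fin.ext_iff] at hjj
      simp only [hBf] at hjj
      omega
  set B : Finset (Fin (n + 1)) := Finset.image Bf Finset.univ with hBdef
  have hBcard : B.card = n + 1 - p := by
    rw [hBdef, Finset.card_image_of_injective _ hBf_inj, Finset.card_univ, Fintype.card_fin]
  have hAcard : Bᶜ.card = p := by
    rw [Finset.card_compl, hBcard]
    simp only [Fintype.card_fin]
    omega
  set emb := Bᶜ.orderEmbOfFin hAcard with hemb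
  set w0 : Fin (n + 1) → Fin (n + 1) := fun k =>
    if h : (k : ℕ) < p then emb ⟨(k : ℕ), h⟩
    else ⟨gvF n p F ((k : ℕ) - p), gvF_lt hpn F _⟩ with hw0
  have hw0_first : ∀ (k : Fin (n + 1)) (h : (k : ℕ) < p), w0 k = emb ⟨(k : ℕ), h⟩ := by
    intro k h; simp only [hw0]; rw [dif_pos h]
  have hw0_second : ∀ (k : Fin (n + 1)) (h : p ≤ (k : ℕ)),
      w0 k = ⟨gvF n p F ((k : ℕ) - p), gvF_lt hpn F _⟩ := by
    intro k h; simp only [hw0]; rw [dif_neg (by omega)]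
  have hw0_inj : Function.Injective w0 := by
    intro k k' heq
    rcases Nat.lt_or_ge (k : ℕ) p with hk | hk <;> rcases Nat.lt_or_ge (k' : ℕ) p with hk' | hk'
    · rw [hw0_first k hk, hw0_first k' hk'] at heq
      have := emb.injective heq
      rw [Fin.ext_iff] at this
      exact Fin.ext (by simpa using this)
    · exfalso
      rw [hw0_first k hk, hw0_second k' hk'] at heq
      have h1 : emb ⟨(k : ℕ), hk⟩ ∈ Bᶜ := Finset.orderEmbOfFin_mem _ _ _
      rw [heq] at h1
      rw [Finset.mem_compl] at h1
      apply h1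
      rw [hBdef, Finset.mem_image]
      exact ⟨⟨(k' : ℕ) - p, by have := k'.isLt; omega⟩, Finset.mem_univ _, rfl⟩
    · exfalso
      rw [hw0_first k' hk', hw0_second k hk] at heq
      have h1 : emb ⟨(k' : ℕ), hk'⟩ ∈ Bᶜ := Finset.orderEmbOfFin_mem _ _ _
      rw [← heq] at h1
      rw [Finset.mem_compl] at h1
      apply h1
      rw [hBdef, Finset.mem_image]
      exact ⟨⟨(k : ℕ) - p, by have := k.isLt; omega⟩, Finset.mem_univ _, rfl⟩
    · rw [hw0_second k hk, hw0_second k' hk'] at heq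
      rw [Fin.ext_iff] at heq
      simp only at heq
      rcases Nat.lt_trichotomy ((k : ℕ) - p) ((k' : ℕ) - p) with h | h | h
      · exfalso
        have := gvF_mono F hF h (by have := k'.isLt; omega)
        omega
      · exact Fin.ext (by omega)
      · exfalso
        have := gvF_mono F hF h (by have := k.isLt; omega)
        omega
  let w : Equiv.Perm (Fin (n + 1)) :=
    Equiv.ofBijective w0 ((Finite.injective_iff_bijective).mp hw0_inj)
  have hwk : ∀ k, w k = w0 k := fun k => rfl
  refine ⟨w, ⟨?_, ?_⟩, ?_⟩
  · intro i j hij hjp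
    have hip : (i : ℕ) < p := lt_trans (Fin.lt_def.mp hij) hjp
    rw [hwk, hwk, hw0_first i hip, hw0_first j hjp]
    exact emb.strictMono (by rw [Fin.mk_lt_mk]; exact Fin.lt_def.mp hij)
  · intro i j hpi hij
    have hpj : p ≤ (j : ℕ) := by have := Fin.lt_def.mp hij; omega
    rw [hwk, hwk, hw0_second i hpi, hw0_second j hpj]
    rw [Fin.lt_def]
    simp only
    exact gvF_mono F hF (by have := Fin.lt_def.mp hij; omega) (by have := j.isLt; omega)
  · intro jv h
    have hlt : p + jv < n + 1 := by omega
    unfold fvalN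
    rw [dif_pos hlt]
    rw [hwk, hw0_second ⟨p + jv, hlt⟩ (by simp)]
    simp only
    have e : p + jv - p = jv := by omega
    rw [e]
    unfold gvF
    rw [dif_pos h]
    have : (F ⟨jv, h⟩ : ℕ) ≤ p := Nat.lt_succ_iff.mp (F ⟨jv, h⟩).isLt
    omega

end Surj

section OrderLemmas

variable {n p : ℕ}

def bruhatLE' {m : ℕ} (u v : Equiv.Perm (Fin m)) : Prop :=
  Relation.ReflTransGen
    (fun x y => invNum x < invNum y ∧ ∃ a b : Fin m, a ≠ b ∧ y = x * Equiv.swap a b)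
    u v

lemma bruhatLE'_Ncount {m q : ℕ} {u v : Equiv.Perm (Fin m)} (h : bruhatLE' u v) (t : ℕ) :
    Ncount q v t ≤ Ncount q u t := by
  induction h with
  | refl => exact le_refl _
  | tail _ hstep ih => exact le_trans (Ncount_step_le _ _ hstep t) ih

lemma bruhatLE'_invNum {m : ℕ} {u v : Equiv.Perm (Fin m)} (h : bruhatLE' u v) :
    u = v ∨ invNum u < invNum v := by
  induction h with
  | refl => exact Or.inl rfl
  | tail _ hstep ih =>
    rcases ih with rfl | ih
    · exact Or.inr hstep.1
    · exact Or.inr (lt_trans ih hstep.1)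

lemma card_val_Ico {m : ℕ} (a b : ℕ) (hb : b ≤ m) :
    (((Finset.univ : Finset (Fin m))).filter
      fun k : Fin m => a ≤ (k : ℕ) ∧ (k : ℕ) < b).card = b - a := by
  have e2 : (((Finset.univ : Finset (Fin m))).filter
      fun k : Fin m => a ≤ (k : ℕ) ∧ (k : ℕ) < b).card = (Finset.Ico a b).card := by
    apply Finset.card_bij (fun (x : Fin m) _ => (x : ℕ))
    · intro x hx
      simp only [Finset.mem_filter] at hx
      rw [Finset.mem_Ico]
      exact ⟨hx.2.1, hx.2.2⟩
    · intro x _ y _ hxy; exact Fin.ext hxy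
    · intro x hx
      rw [Finset.mem_Ico] at hx
      exact ⟨⟨x, by omega⟩, Finset.mem_filter.mpr ⟨Finset.mem_univ _, hx.1, hx.2⟩, rfl⟩
  rw [e2, Nat.card_Ico]

lemma grass_dom (hp : 1 ≤ p) (hpn : p ≤ n) {u v : Equiv.Perm (Fin (n + 1))}
    (hu2 : ∀ i j : Fin (n + 1), p ≤ (i : ℕ) → i < j → u i < u j)
    (hv2 : ∀ i j : Fin (n + 1), p ≤ (i : ℕ) → i < j → v i < v j)
    (hN : ∀ t, Ncount p v t ≤ Ncount p u t) :
    ∀ jv (hlt : p + jv < n + 1), (v ⟨p + jv, hlt⟩ : ℕ) ≤ (u ⟨p + jv, hlt⟩ : ℕ) := by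
  intro jv hlt
  by_contra hc
  push_neg at hc
  set t : ℕ := (v ⟨p + jv, hlt⟩ : ℕ) with hT
  have hNu := Ncount_add_M (p := p) u t (by omega)
  have hNv := Ncount_add_M (p := p) v t (by omega)
  have hMv : (((Finset.univ : Finset (Fin (n + 1)))).filter
      fun k : Fin (n + 1) => p ≤ (k : ℕ) ∧ (v k : ℕ) < t).card = jv := grass_M hv2 jv hlt
  have hMu : jv + 1 ≤ (((Finset.univ : Finset (Fin (n + 1)))).filter
      fun k : Fin (n + 1) => p ≤ (k : ℕ) ∧ (u k : ℕ) < t).card := by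
    have hsub : (((Finset.univ : Finset (Fin (n + 1)))).filter
        fun k : Fin (n + 1) => p ≤ (k : ℕ) ∧ (k : ℕ) < p + (jv + 1))
        ⊆ (((Finset.univ : Finset (Fin (n + 1)))).filter
        fun k : Fin (n + 1) => p ≤ (k : ℕ) ∧ (u k : ℕ) < t) := by
      intro k hk
      simp only [Finset.mem_filter] at hk ⊢
      obtain ⟨_, hk1, hk2⟩ := hk
      refine ⟨Finset.mem_univ _, hk1, ?_⟩
      rcases Nat.lt_or_ge (k : ℕ) (p + jv) with h | h
      · have := hu2 k ⟨p + jv, hlt⟩ hk1 (Fin.lt_def.mpr (by simpa using h))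
        rw [Fin.lt_def] at this
        omega
      · have : k = (⟨p + jv, hlt⟩ : Fin (n + 1)) := Fin.ext (by simp; omega)
        rw [this]
        omega
    have := Finset.card_le_card hsub
    rw [card_val_Ico p (p + (jv + 1)) (by omega)] at this
    omega
  have := hN t
  unfold Ncount at this hNu hNv
  omega

lemma grass_fval_mono (hp : 1 ≤ p) (hpn : p ≤ n) {u v : Equiv.Perm (Fin (n + 1))}
    (hu2 : ∀ i j : Fin (n + 1), p ≤ (i : ℕ) → i < j → u i < u j)
    (hv2 : ∀ i j : Fin (n + 1), p ≤ (i : ℕ) → i < j → v i < v j)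
    (hN : ∀ t, Ncount p v t ≤ Ncount p u t) :
    ∀ jv, fvalN n p u jv ≤ fvalN n p v jv := by
  intro jv
  unfold fvalN
  split_ifs with h
  · have := grass_dom hp hpn hu2 hv2 hN jv h
    omega
  · omega

lemma exists_box_between (F G : Fin (n + 1 - p) → Fin (p + 1))
    (hF : Antitone F) (hG : Antitone G) (hle : ∀ j, F j ≤ G j) (hne : F ≠ G) :
    ∃ H : Fin (n + 1 - p) → Fin (p + 1), Antitone H ∧ (∀ j, F j ≤ H j) ∧ (∀ j, H j ≤ G j) ∧
      ∑ j, (H j : ℕ) = (∑ j, (F j : ℕ)) + 1 := by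
  classical
  set S : Finset (Fin (n + 1 - p)) := Finset.univ.filter (fun j => F j ≠ G j) with hS
  have hSne : S.Nonempty := by
    rw [Finset.filter_nonempty_iff]
    rcases Function.ne_iff.mp hne with ⟨j, hj⟩
    exact ⟨j, Finset.mem_univ _, hj⟩
  set j0 := S.min' hSne with hj0
  have hj0S : j0 ∈ S := S.min'_mem hSne
  have hj0lt : (F j0 : ℕ) < (G j0 : ℕ) := by
    have h1 : F j0 ≤ G j0 := hle j0
    have h2 : F j0 ≠ G j0 := by
      rw [hS] at hj0S
      simpa using hj0S
    have := lt_of_le_of_ne h1 h2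
    exact this
  have hmin : ∀ j, j < j0 → F j = G j := by
    intro j hj
    by_contra hc
    have : j ∈ S := by rw [hS]; simpa using hc
    have := S.min'_le j this
    omega
  have hFj0p : (F j0 : ℕ) < p + 1 - 1 + 1 := by
    have := (G j0).isLt
    omega
  set H : Fin (n + 1 - p) → Fin (p + 1) :=
    fun j => if j = j0 then ⟨(F j0 : ℕ) + 1, by have := (G j0).isLt; omega⟩ else F j with hH
  have hHj0 : (H j0 : ℕ) = (F j0 : ℕ) + 1 := by simp [hH]
  have hHne : ∀ j, j ≠ j0 → H j = F j := by
    intro j hj; simp [hH, hj]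
  refine ⟨H, ?_, ?_, ?_, ?_⟩
  · -- Antitone
    intro j j' hjj
    rcases eq_or_ne j j0 with hj | hj <;> rcases eq_or_ne j' j0 with hj' | hj'
    · rw [hj, hj']
    · -- j = j0 < j' : H j' = F j' ≤ F j0 < H j0
      rw [Fin.le_def, hHne j' hj', hj, hHj0]
      have hlt : j0 ≤ j' := hj ▸ hjj
      have := Fin.le_def.mp (hF hlt)
      omega
    · -- j < j0 = j' : H j = F j = G j ≥ G j0 > F j0, H j' = F j0 + 1
      rw [Fin.le_def, hHne j hj, hj', hHj0]
      have hjlt : j < j0 := lt_of_le_of_ne (hj' ▸ hjj) hj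
      rw [hmin j hjlt]
      have := Fin.le_def.mp (hG (le_of_lt hjlt))
      omega
    · rw [hHne j hj, hHne j' hj']
      exact hF hjj
  · -- F ≤ H
    intro j
    rcases eq_or_ne j j0 with hj | hj
    · rw [Fin.le_def, hj, hHj0]; omega
    · rw [hHne j hj]
  · -- H ≤ G
    intro j
    rcases eq_or_ne j j0 with hj | hj
    · rw [Fin.le_def, hj, hHj0]; omega
    · rw [hHne j hj]; exact hle j
  · -- sum
    have e1 : ∑ j, (H j : ℕ) = (H j0 : ℕ) + ∑ j ∈ Finset.univ.erase j0, (H j : ℕ) :=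
      (Finset.add_sum_erase _ _ (Finset.mem_univ j0)).symm
    have e2 : ∑ j, (F j : ℕ) = (F j0 : ℕ) + ∑ j ∈ Finset.univ.erase j0, (F j : ℕ) :=
      (Finset.add_sum_erase _ _ (Finset.mem_univ j0)).symm
    have e3 : ∑ j ∈ Finset.univ.erase j0, (H j : ℕ) = ∑ j ∈ Finset.univ.erase j0, (F j : ℕ) := by
      apply Finset.sum_congr rfl
      intro j hj
      rw [hHne j (Finset.ne_of_mem_erase hj)]
    omega

end OrderLemmas

section BoxStep

variable {n p : ℕ}

lemma box_step (hp : 1 ≤ p) (hpn : p ≤ n) {u : Equiv.Perm (Fin (n + 1))} (hu : IsGrass p u)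
    (H : Fin (n + 1 - p) → Fin (p + 1)) (hH : Antitone H)
    (hge : ∀ j : Fin (n + 1 - p), fvalN n p u (j : ℕ) ≤ (H j : ℕ))
    (hsum : ∑ j, (H j : ℕ) = (∑ j : Fin (n + 1 - p), fvalN n p u (j : ℕ)) + 1) :
    ∃ v : Equiv.Perm (Fin (n + 1)), IsGrass p v ∧
      (∀ j : Fin (n + 1 - p), fvalN n p v (j : ℕ) = (H j : ℕ)) ∧
      invNum u < invNum v ∧ ∃ a b : Fin (n + 1), a ≠ b ∧ v = u * Equiv.swap a b := by
  classical
  obtain ⟨hu1, hu2⟩ := hu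
  -- find the unique index where H exceeds fvalN u
  have hDsum : ∑ j : Fin (n + 1 - p), ((H j : ℕ) - fvalN n p u (j : ℕ)) = 1 := by
    rw [Finset.sum_tsub_distrib _ (fun j _ => hge j)]
    omega
  have hex : ∃ j0 : Fin (n + 1 - p), (H j0 : ℕ) - fvalN n p u (j0 : ℕ) ≠ 0 := by
    by_contra hc
    push_neg at hc
    rw [Finset.sum_eq_zero (fun j _ => hc j)] at hDsum
    omega
  obtain ⟨j0, hj0⟩ := hex
  have hsplit : ((H j0 : ℕ) - fvalN n p u (j0 : ℕ)) +
      ∑ j ∈ Finset.univ.erase j0, ((H j : ℕ) - fvalN n p u (j : ℕ)) = 1 := by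
    have h := Finset.add_sum_erase Finset.univ
      (fun j : Fin (n + 1 - p) => (H j : ℕ) - fvalN n p u (j : ℕ)) (Finset.mem_univ j0)
    omega
  have hj0eq : (H j0 : ℕ) = fvalN n p u (j0 : ℕ) + 1 := by
    have := hge j0
    omega
  have hothers : ∀ j : Fin (n + 1 - p), j ≠ j0 → (H j : ℕ) = fvalN n p u (j : ℕ) := by
    intro j hj
    have h0 : ∑ j ∈ Finset.univ.erase j0, ((H j : ℕ) - fvalN n p u (j : ℕ)) = 0 := by omega
    have := (Finset.sum_eq_zero_iff).mp h0 j (Finset.mem_erase.mpr ⟨hj, Finset.mem_univ _⟩)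
    have := hge j
    omega
  -- basic values
  have hj0lt := j0.isLt
  have hlt0 : p + (j0 : ℕ) < n + 1 := by omega
  set jv0 : ℕ := (j0 : ℕ) with hjv0
  set t : ℕ := (u ⟨p + jv0, hlt0⟩ : ℕ) with ht
  have htlow : jv0 ≤ t := grass_lower hu2 jv0 hlt0
  have hthigh : t ≤ p + jv0 := grass_upper hp hu2 jv0 hlt0
  have hfval0 : fvalN n p u jv0 = p + jv0 - t := by
    unfold fvalN; rw [dif_pos hlt0]
  have hHj0p : (H j0 : ℕ) ≤ p := Nat.lt_succ_iff.mp (H j0).isLt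
  have htpos : jv0 + 1 ≤ t := by omega
  -- the position of value t - 1 in u
  set a : Fin (n + 1) := u.symm ⟨t - 1, by omega⟩ with hadef
  have hua : (u a : ℕ) = t - 1 := by rw [hadef, Equiv.apply_symm_apply]
  have hap : (a : ℕ) < p := by
    by_contra hpa
    push_neg at hpa
    have halt := a.isLt
    -- a is in the second block
    obtain ⟨jv', hjv'eq⟩ : ∃ jv', (a : ℕ) = p + jv' := ⟨(a : ℕ) - p, by omega⟩
    have hjv'lt : p + jv' < n + 1 := by omega
    have haval : a = ⟨p + jv', hjv'lt⟩ := Fin.ext (by simp [hjv'eq])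
    -- u a < u (p + jv0), so jv' < jv0
    have h1 : jv' < jv0 := by
      have := (grass_block2_iff hu2 a ⟨p + jv0, hlt0⟩ hpa (by simp)).mp (by rw [hua]; omega)
      simp at this
      omega
    -- no second-block position between, so jv' = jv0 - 1
    have h2 : jv' = jv0 - 1 := by
      by_contra hc
      have hj1lt : p + (jv0 - 1) < n + 1 := by omega
      have hb1 : (u a : ℕ) < (u ⟨p + (jv0 - 1), hj1lt⟩ : ℕ) := by
        rw [haval]
        exact (grass_block2_iff hu2 _ _ (by simp) (by simp)).mpr (by simp; omega)
      have hb2 : (u ⟨p + (jv0 - 1), hj1lt⟩ : ℕ) < t := by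
        rw [ht]
        exact (grass_block2_iff hu2 _ _ (by simp) (by simp)).mpr (by simp; omega)
      rw [hua] at hb1
      omega
    -- then fvalN u (jv0 - 1) = fvalN u jv0, contradicting antitonicity of H
    have hfval1 : fvalN n p u (jv0 - 1) = p + jv0 - t := by
      unfold fvalN
      rw [dif_pos (by omega : p + (jv0 - 1) < n + 1)]
      have : (⟨p + (jv0 - 1), by omega⟩ : Fin (n + 1)) = ⟨p + jv', hjv'lt⟩ :=
        Fin.ext (by simp; omega)
      rw [this, ← haval, hua]
      omega
    set j1 : Fin (n + 1 - p) := ⟨jv0 - 1, by omega⟩ with hj1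
    have hj1ne : j1 ≠ j0 := by
      rw [Fin.ne_iff_vne]
      simp [hj1]
      omega
    have hHj1 : (H j1 : ℕ) = p + jv0 - t := by
      rw [hothers j1 hj1ne]
      simpa [hj1] using hfval1
    have hanti : H j0 ≤ H j1 := hH (by rw [Fin.le_def]; simp [hj1]; omega)
    rw [Fin.le_def] at hanti
    omega
  -- now define the swap
  set b : Fin (n + 1) := ⟨p + jv0, hlt0⟩ with hbdef
  have hab : a ≠ b := by
    rw [Fin.ne_iff_vne]
    simp [hbdef]
    omega
  set v : Equiv.Perm (Fin (n + 1)) := u * Equiv.swap a b with hvdef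
  have hva : (v a : ℕ) = t := by
    rw [hvdef]; simp [Equiv.Perm.mul_apply, Equiv.swap_apply_left]; exact ht.symm
  have hvb : (v b : ℕ) = t - 1 := by
    rw [hvdef]
    simp only [Equiv.Perm.mul_apply, Equiv.swap_apply_right]
    exact hua
  have hvo : ∀ k, k ≠ a → k ≠ b → v k = u k := by
    intro k h1 h2
    rw [hvdef]
    simp [Equiv.Perm.mul_apply, Equiv.swap_apply_of_ne_of_ne h1 h2]
  -- v is Grassmannian
  have hv1 : ∀ i j : Fin (n + 1), i < j → (j : ℕ) < p → v i < v j := by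
    intro i j hij hjp
    have hjb : j ≠ b := by rw [Fin.ne_iff_vne]; simp [hbdef]; omega
    have hip : (i : ℕ) < p := by have := Fin.lt_def.mp hij; omega
    have hib : i ≠ b := by rw [Fin.ne_iff_vne]; simp [hbdef]; omega
    rw [Fin.lt_def]
    rcases eq_or_ne i a with hia | hia
    · -- v i = t; v j = u j where u j > u a = t - 1 and u j ≠ t
      rw [hia, hva, hvo j (by rw [← hia]; exact fun hc => (ne_of_lt hij) hc.symm) hjb]
      have h1 : (u a : ℕ) < (u j : ℕ) := Fin.lt_def.mp (hu1 a j (hia ▸ hij) hjp)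
      have h2 : u j ≠ u b := fun hc => hjb (u.injective hc)
      have h3 : (u b : ℕ) = t := rfl
      rw [Fin.ne_iff_vne] at h2
      rw [hua] at h1
      omega
    · rcases eq_or_ne j a with hja | hja
      · rw [hja, hva, hvo i hia hib]
        have h1 : (u i : ℕ) < (u a : ℕ) := Fin.lt_def.mp (hu1 i a (hja ▸ hij) hap)
        rw [hua] at h1
        omega
      · rw [hvo i hia hib, hvo j hja hjb]
        exact Fin.lt_def.mp (hu1 i j hij hjp)
  have hv2 : ∀ i j : Fin (n + 1), p ≤ (i : ℕ) → i < j → v i < v j := by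
    intro i j hpi hij
    have hpj : p ≤ (j : ℕ) := by have := Fin.lt_def.mp hij; omega
    have hia : i ≠ a := by rw [Fin.ne_iff_vne]; omega
    have hja : j ≠ a := by rw [Fin.ne_iff_vne]; omega
    rw [Fin.lt_def]
    rcases eq_or_ne i b with hib | hib
    · -- v i = t - 1, v j = u j > u b = t
      rw [hib, hvb, hvo j hja (by rw [← hib]; exact fun hc => (ne_of_lt hij) hc.symm)]
      have h1 : (u b : ℕ) < (u j : ℕ) := Fin.lt_def.mp (hu2 b j (by simp [hbdef]) (hib ▸ hij))
      have h3 : (u b : ℕ) = t := rfl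
      omega
    · rcases eq_or_ne j b with hjb | hjb
      · -- v j = t - 1; v i = u i < u b = t and u i ≠ t - 1 = u a
        rw [hjb, hvb, hvo i hia hib]
        have h1 : (u i : ℕ) < (u b : ℕ) := Fin.lt_def.mp (hu2 i b hpi (hjb ▸ hij))
        have h2 : u i ≠ u a := fun hc => hia (u.injective hc)
        rw [Fin.ne_iff_vne] at h2
        rw [hua] at h2
        have h3 : (u b : ℕ) = t := rfl
        omega
      · rw [hvo i hia hib, hvo j hja hjb]
        exact Fin.lt_def.mp (hu2 i j hpi hij)
  -- partition of v
  have hfv : ∀ j : Fin (n + 1 - p), fvalN n p v (j : ℕ) = (H j : ℕ) := by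
    intro j
    have hjlt := j.isLt
    have hjlt' : p + (j : ℕ) < n + 1 := by omega
    rcases eq_or_ne j j0 with hjj | hjj
    · rw [hjj, hj0eq, hfval0]
      unfold fvalN
      rw [dif_pos hlt0]
      have : (⟨p + jv0, hlt0⟩ : Fin (n + 1)) = b := rfl
      rw [this, hvb]
      omega
    · rw [hothers j hjj]
      unfold fvalN
      rw [dif_pos hjlt', dif_pos hjlt']
      have hkb : (⟨p + (j : ℕ), hjlt'⟩ : Fin (n + 1)) ≠ b := by
        rw [Fin.ne_iff_vne]
        simp [hbdef]
        rw [Fin.ne_iff_vne] at hjj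
        omega
      have hka : (⟨p + (j : ℕ), hjlt'⟩ : Fin (n + 1)) ≠ a := by
        rw [Fin.ne_iff_vne]
        simp
        omega
      rw [hvo _ hka hkb]
  -- inversion numbers
  have hinvu : invNum u = ∑ j : Fin (n + 1 - p), fvalN n p u (j : ℕ) :=
    invNum_eq_sum_fvalN hpn hu1 hu2
  have hinvv : invNum v = ∑ j : Fin (n + 1 - p), fvalN n p v (j : ℕ) :=
    invNum_eq_sum_fvalN hpn hv1 hv2
  have hsumv : ∑ j : Fin (n + 1 - p), fvalN n p v (j : ℕ) = ∑ j, (H j : ℕ) :=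
    Finset.sum_congr rfl (fun j _ => hfv j)
  exact ⟨v, ⟨hv1, hv2⟩, hfv, by omega, a, b, hab, rfl⟩

end BoxStep

section Chain

variable {n p : ℕ}

lemma bruhat_of_fval_le_aux (hp : 1 ≤ p) (hpn : p ≤ n) :
    ∀ d : ℕ, ∀ u v : Equiv.Perm (Fin (n + 1)), IsGrass p u → IsGrass p v →
      (∀ j : Fin (n + 1 - p), fvalN n p u (j : ℕ) ≤ fvalN n p v (j : ℕ)) →
      ((∑ j : Fin (n + 1 - p), fvalN n p v (j : ℕ))
        = (∑ j : Fin (n + 1 - p), fvalN n p u (j : ℕ)) + d) →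
      bruhatLE' u v := by
  intro d
  induction d with
  | zero =>
    intro u v hu hv hle hsum
    have heq : ∀ j : Fin (n + 1 - p), fvalN n p u (j : ℕ) = fvalN n p v (j : ℕ) := by
      by_contra hc
      push_neg at hc
      obtain ⟨j, hj⟩ := hc
      have : (∑ j : Fin (n + 1 - p), fvalN n p u (j : ℕ))
          < ∑ j : Fin (n + 1 - p), fvalN n p v (j : ℕ) :=
        Finset.sum_lt_sum (fun j _ => hle j)
          ⟨j, Finset.mem_univ _, lt_of_le_of_ne (hle j) hj⟩
      omega
    have : fmapGr n p ⟨u, hu⟩ = fmapGr n p ⟨v, hv⟩ := by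
      funext j
      exact Fin.ext (heq j)
    have := fmapGr_injective hp hpn this
    have : u = v := congrArg Subtype.val this
    rw [this]
    exact Relation.ReflTransGen.refl
  | succ d ih =>
    intro u v hu hv hle hsum
    have hFG : fmapGr n p ⟨u, hu⟩ ≠ fmapGr n p ⟨v, hv⟩ := by
      intro hc
      have : ∀ j : Fin (n + 1 - p), fvalN n p u (j : ℕ) = fvalN n p v (j : ℕ) := by
        intro j
        have := congrFun hc j
        exact Fin.ext_iff.mp this
      have : (∑ j : Fin (n + 1 - p), fvalN n p u (j : ℕ))
          = ∑ j : Fin (n + 1 - p), fvalN n p v (j : ℕ) :=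
        Finset.sum_congr rfl (fun j _ => this j)
      omega
    obtain ⟨H, hHanti, hFH, hHG, hsumH⟩ :=
      exists_box_between (fmapGr n p ⟨u, hu⟩) (fmapGr n p ⟨v, hv⟩)
        (fmapGr_antitone _) (fmapGr_antitone _)
        (fun j => Fin.le_def.mpr (hle j)) hFG
    obtain ⟨w', hw', hfw', hinv, a, b, hab, heq⟩ :=
      box_step hp hpn hu H hHanti (fun j => Fin.le_def.mp (hFH j)) hsumH
    have htail : bruhatLE' w' v := by
      apply ih w' v hw' hv
      · intro j
        rw [hfw' j]
        exact Fin.le_def.mp (hHG j)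
      · have : ∑ j : Fin (n + 1 - p), fvalN n p w' (j : ℕ) = ∑ j, (H j : ℕ) :=
          Finset.sum_congr rfl (fun j _ => hfw' j)
        rw [this, hsumH]
        have e2 : ∑ j : Fin (n + 1 - p), ((fmapGr n p ⟨u, hu⟩) j : ℕ)
            = ∑ j : Fin (n + 1 - p), fvalN n p u (j : ℕ) := rfl
        omega
    exact Relation.ReflTransGen.head ⟨hinv, a, b, hab, heq⟩ htail

lemma bruhat_of_fval_le (hp : 1 ≤ p) (hpn : p ≤ n) {u v : Equiv.Perm (Fin (n + 1))}
    (hu : IsGrass p u) (hv : IsGrass p v)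
    (hle : ∀ j : Fin (n + 1 - p), fvalN n p u (j : ℕ) ≤ fvalN n p v (j : ℕ)) :
    bruhatLE' u v := by
  have hsle : (∑ j : Fin (n + 1 - p), fvalN n p u (j : ℕ))
      ≤ ∑ j : Fin (n + 1 - p), fvalN n p v (j : ℕ) :=
    Finset.sum_le_sum (fun j _ => hle j)
  exact bruhat_of_fval_le_aux hp hpn
    ((∑ j : Fin (n + 1 - p), fvalN n p v (j : ℕ))
      - ∑ j : Fin (n + 1 - p), fvalN n p u (j : ℕ)) u v hu hv hle (by omega)

end Chain

/-- For the symmetric group `S_(n+1)` with `J = S \ {s_p}`, the covering relations of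
the Bruhat order on the quotient `W^J = A_n/(A_(p-1)×A_(n-p))` (whose elements are the
permutations increasing on positions `1..p` and `p+1..n+1`) correspond, under the
sorting bijection with partitions inside a `p × (n+1-p)` rectangle (antitone vectors of
part sizes), exactly to adding a single box in Young's lattice restricted to the
rectangle: `u` is covered by `v` in Bruhat order iff the partition of `v` contains the
partition of `u` and has exactly one more box.  (Equivalently, a single labeled box can
be appended to the diagram of `u` to form a new valid subdiagram.) -/
theorem bruhat_covers_are_box_additions (n p : ℕ) (hp : 1 ≤ p) (hpn : p ≤ n) :
    ∃ e : {w : Equiv.Perm (Fin (n + 1)) //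
            (∀ i j : Fin (n + 1), i < j → (j : ℕ) < p → w i < w j) ∧
            (∀ i j : Fin (n + 1), p ≤ (i : ℕ) → i < j → w i < w j)} ≃
          {f : Fin (n + 1 - p) → Fin (p + 1) // Antitone f},
      ∀ u v,
        (bruhatLE u.1 v.1 ∧ u ≠ v ∧
          ∀ w, bruhatLE u.1 w.1 → bruhatLE w.1 v.1 → w = u ∨ w = v) ↔
        ((∀ i, (e u).1 i ≤ (e v).1 i) ∧
          ∑ i, ((e v).1 i : ℕ) = (∑ i, ((e u).1 i : ℕ)) + 1) := by
  classical
  set eFun : {w : Equiv.Perm (Fin (n + 1)) //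
      (∀ i j : Fin (n + 1), i < j → (j : ℕ) < p → w i < w j) ∧
      (∀ i j : Fin (n + 1), p ≤ (i : ℕ) → i < j → w i < w j)} →
      {f : Fin (n + 1 - p) → Fin (p + 1) // Antitone f} :=
    fun U => ⟨fmapGr n p ⟨U.1, U.2⟩, fmapGr_antitone _⟩ with heFun
  have hinj : Function.Injective eFun := by
    intro U V h
    have h' : fmapGr n p ⟨U.1, U.2⟩ = fmapGr n p ⟨V.1, V.2⟩ := congrArg Subtype.val h
    have := fmapGr_injective hp hpn h'
    exact Subtype.ext (congrArg Subtype.val this)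
  have hsurj : Function.Surjective eFun := by
    intro F
    obtain ⟨w, hw, hval⟩ := exists_grass_of_antitone hp hpn F.1 F.2
    refine ⟨⟨w, hw.1, hw.2⟩, ?_⟩
    apply Subtype.ext
    funext j
    apply Fin.ext
    have := hval (j : ℕ) j.isLt
    exact this
  refine ⟨Equiv.ofBijective eFun ⟨hinj, hsurj⟩, ?_⟩
  intro u v
  have hgu : IsGrass p u.1 := ⟨u.2.1, u.2.2⟩
  have hgv : IsGrass p v.1 := ⟨v.2.1, v.2.2⟩
  have hvalu : ∀ i : Fin (n + 1 - p),
      (((Equiv.ofBijective eFun ⟨hinj, hsurj⟩) u).1 i : ℕ) = fvalN n p u.1 (i : ℕ) :=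
    fun i => rfl
  have hvalv : ∀ i : Fin (n + 1 - p),
      (((Equiv.ofBijective eFun ⟨hinj, hsurj⟩) v).1 i : ℕ) = fvalN n p v.1 (i : ℕ) :=
    fun i => rfl
  have hsum_u : ∑ i, (((Equiv.ofBijective eFun ⟨hinj, hsurj⟩) u).1 i : ℕ)
      = ∑ i : Fin (n + 1 - p), fvalN n p u.1 (i : ℕ) := rfl
  have hsum_v : ∑ i, (((Equiv.ofBijective eFun ⟨hinj, hsurj⟩) v).1 i : ℕ)
      = ∑ i : Fin (n + 1 - p), fvalN n p v.1 (i : ℕ) := rfl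
  have hinvu : invNum u.1 = ∑ j : Fin (n + 1 - p), fvalN n p u.1 (j : ℕ) :=
    invNum_eq_sum_fvalN hpn u.2.1 u.2.2
  have hinvv : invNum v.1 = ∑ j : Fin (n + 1 - p), fvalN n p v.1 (j : ℕ) :=
    invNum_eq_sum_fvalN hpn v.2.1 v.2.2
  constructor
  · rintro ⟨h1, h2, h3⟩
    have hN : ∀ t, Ncount p v.1 t ≤ Ncount p u.1 t := fun t => bruhatLE'_Ncount h1 t
    have hle : ∀ j : Fin (n + 1 - p), fvalN n p u.1 (j : ℕ) ≤ fvalN n p v.1 (j : ℕ) :=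
      fun j => grass_fval_mono hp hpn u.2.2 v.2.2 hN (j : ℕ)
    have hne : ∃ j : Fin (n + 1 - p), fvalN n p u.1 (j : ℕ) ≠ fvalN n p v.1 (j : ℕ) := by
      by_contra hc
      push_neg at hc
      apply h2
      apply hinj
      apply Subtype.ext
      funext j
      exact Fin.ext (hc j)
    obtain ⟨j, hj⟩ := hne
    have hsum_lt : (∑ j : Fin (n + 1 - p), fvalN n p u.1 (j : ℕ))
        < ∑ j : Fin (n + 1 - p), fvalN n p v.1 (j : ℕ) :=
      Finset.sum_lt_sum (fun j _ => hle j)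
        ⟨j, Finset.mem_univ _, lt_of_le_of_ne (hle j) hj⟩
    have hsum_eq : (∑ j : Fin (n + 1 - p), fvalN n p v.1 (j : ℕ))
        = (∑ j : Fin (n + 1 - p), fvalN n p u.1 (j : ℕ)) + 1 := by
      by_contra hc
      have hge2 : (∑ j : Fin (n + 1 - p), fvalN n p v.1 (j : ℕ))
          ≥ (∑ j : Fin (n + 1 - p), fvalN n p u.1 (j : ℕ)) + 2 := by omega
      have hFG : fmapGr n p ⟨u.1, hgu⟩ ≠ fmapGr n p ⟨v.1, hgv⟩ := by
        intro hceq
        exact hj (Fin.ext_iff.mp (congrFun hceq j))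
      obtain ⟨H, hHanti, hFH, hHG, hsumH⟩ :=
        exists_box_between (fmapGr n p ⟨u.1, hgu⟩) (fmapGr n p ⟨v.1, hgv⟩)
          (fmapGr_antitone _) (fmapGr_antitone _)
          (fun j => Fin.le_def.mpr (hle j)) hFG
      obtain ⟨w', hw', hfw', hinvlt, a, b, hab, heqw⟩ :=
        box_step hp hpn hgu H hHanti (fun j => Fin.le_def.mp (hFH j)) hsumH
      set W : {w : Equiv.Perm (Fin (n + 1)) //
          (∀ i j : Fin (n + 1), i < j → (j : ℕ) < p → w i < w j) ∧
          (∀ i j : Fin (n + 1), p ≤ (i : ℕ) → i < j → w i < w j)} :=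
        ⟨w', hw'.1, hw'.2⟩ with hW
      have hsumw : ∑ j : Fin (n + 1 - p), fvalN n p w' (j : ℕ) = ∑ j, (H j : ℕ) :=
        Finset.sum_congr rfl (fun j _ => hfw' j)
      have hsumF : ∑ j, ((fmapGr n p ⟨u.1, hgu⟩) j : ℕ)
          = ∑ j : Fin (n + 1 - p), fvalN n p u.1 (j : ℕ) := rfl
      have hbw1 : bruhatLE u.1 W.1 := Relation.ReflTransGen.single ⟨hinvlt, a, b, hab, heqw⟩
      have hbw2 : bruhatLE W.1 v.1 := by
        apply bruhat_of_fval_le hp hpn hw' hgv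
        intro j
        rw [hfw' j]
        exact Fin.le_def.mp (hHG j)
      rcases h3 W hbw1 hbw2 with hWu | hWv
      · have : w' = u.1 := congrArg Subtype.val hWu
        rw [this] at hsumw
        omega
      · have : w' = v.1 := congrArg Subtype.val hWv
        rw [this] at hsumw
        omega
    constructor
    · intro i
      rw [Fin.le_def]
      exact hle i
    · rw [hsum_u, hsum_v]
      exact hsum_eq
  · rintro ⟨hle0, hsum0⟩
    have hle : ∀ j : Fin (n + 1 - p), fvalN n p u.1 (j : ℕ) ≤ fvalN n p v.1 (j : ℕ) :=
      fun j => Fin.le_def.mp (hle0 j)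
    have hsum' : (∑ j : Fin (n + 1 - p), fvalN n p v.1 (j : ℕ))
        = (∑ j : Fin (n + 1 - p), fvalN n p u.1 (j : ℕ)) + 1 := by
      rw [hsum_u, hsum_v] at hsum0
      exact hsum0
    obtain ⟨w', hw', hfw', hinvlt, a, b, hab, heqw⟩ :=
      box_step hp hpn hgu (fmapGr n p ⟨v.1, hgv⟩) (fmapGr_antitone _) (fun j => hle j)
        (by
          have : ∑ j, ((fmapGr n p ⟨v.1, hgv⟩) j : ℕ)
              = ∑ j : Fin (n + 1 - p), fvalN n p v.1 (j : ℕ) := rfl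
          rw [this]
          exact hsum')
    have hwv : w' = v.1 := by
      have : fmapGr n p ⟨w', hw'⟩ = fmapGr n p ⟨v.1, hgv⟩ := by
        funext j
        exact Fin.ext (hfw' j)
      exact congrArg Subtype.val (fmapGr_injective hp hpn this)
    rw [hwv] at hinvlt heqw
    refine ⟨Relation.ReflTransGen.single ⟨hinvlt, a, b, hab, heqw⟩, ?_, ?_⟩
    · intro hc
      rw [hc] at hsum'
      omega
    · intro w hw1 hw2
      rcases bruhatLE'_invNum hw1 with heq1 | hlt1
      · exact Or.inl (Subtype.ext heq1.symm)
      · rcases bruhatLE'_invNum hw2 with heq2 | hlt2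
        · exact Or.inr (Subtype.ext heq2)
        · exfalso
          omega
end
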